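/- arXiv:1710.05763 — 8 statements merged into one kernel-verified Lean document; each statement's English description precedes it below -/
import Mathlib

section
/- For every Lebesgue-measurable set A ⊆ [0,1], the two-dimensional Lebesgue measure of the set {(x,y) ∈ [0,1]² : (x ∈ A and x < y) or (x ∉ A and y < x)} is at most 3/4. -/
open MeasureTheory Set

/-- For every Lebesgue-measurable set `A ⊆ [0,1]`, the two-dimensional Lebesgue measure of
`{(x,y) ∈ [0,1]² | (x ∈ A ∧ x < y) ∨ (x ∉ A ∧ y < x)}` is at most `3/4`. -/
theorem stmt_1 (A : Set ℝ) (hA : MeasurableSet A) (hA' : A ⊆ Set.Icc 0 1) :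
    volume {p : ℝ × ℝ | p ∈ Icc (0:ℝ) 1 ×ˢ Icc (0:ℝ) 1 ∧
        ((p.1 ∈ A ∧ p.1 < p.2) ∨ (p.1 ∉ A ∧ p.2 < p.1))} ≤ 3/4 := by
  set E : Set (ℝ × ℝ) := {p : ℝ × ℝ | p ∈ Icc (0:ℝ) 1 ×ˢ Icc (0:ℝ) 1 ∧
        ((p.1 ∈ A ∧ p.1 < p.2) ∨ (p.1 ∉ A ∧ p.2 < p.1))} with hE
  have hbox : volume (Icc (0:ℝ) 1 ×ˢ Icc (0:ℝ) 1) = 1 := by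
    rw [Measure.volume_eq_prod, Measure.prod_prod, Real.volume_Icc]
    norm_num
  have hEm : MeasurableSet E := by
    apply MeasurableSet.inter
    · exact (measurableSet_Icc.prod measurableSet_Icc)
    · apply MeasurableSet.union
      · exact (hA.preimage measurable_fst).inter (measurableSet_lt measurable_fst measurable_snd)
      · exact (hA.preimage measurable_fst).compl.inter
          (measurableSet_lt measurable_snd measurable_fst)
  set T : ℝ × ℝ → ℝ × ℝ := fun p => (p.1, 1 - p.2) with hTdef
  have hTmeas : Measurable T := by fun_prop
  have hT : MeasurePreserving T volume volume := by
    rw [Measure.volume_eq_prod]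
    exact (MeasurePreserving.id volume).prod (Measure.measurePreserving_sub_left volume 1)
  set F := T ⁻¹' E with hF
  have hFE : volume F = volume E := hT.measure_preimage hEm.nullMeasurableSet
  set G : Set (ℝ × ℝ) := {p | p ∈ Icc (0:ℝ) 1 ×ˢ Icc (0:ℝ) 1 ∧
      ((p.1 < p.2 ∧ p.1 + p.2 < 1) ∨ (p.2 < p.1 ∧ 1 < p.1 + p.2))} with hG
  have hGm : MeasurableSet G := by
    apply MeasurableSet.inter
    · exact (measurableSet_Icc.prod measurableSet_Icc)
    · apply MeasurableSet.union
      · exact (measurableSet_lt measurable_fst measurable_snd).inter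
          (measurableSet_lt (measurable_fst.add measurable_snd) measurable_const)
      · exact (measurableSet_lt measurable_snd measurable_fst).inter
          (measurableSet_lt measurable_const (measurable_fst.add measurable_snd))
  have hswap : MeasurePreserving (Prod.swap : ℝ×ℝ → ℝ×ℝ) volume volume := by
    rw [Measure.volume_eq_prod]
    exact Measure.measurePreserving_swap
  set G' := (Prod.swap : ℝ×ℝ → ℝ×ℝ) ⁻¹' G with hG'def
  have hG' : volume G' = volume G := hswap.measure_preimage hGm.nullMeasurableSet
  have hdisj : Disjoint G G' := by
    rw [Set.disjoint_left]
    rintro ⟨x, y⟩ ⟨-, h1⟩ ⟨-, h2⟩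
    simp only [Set.mem_preimage, Set.mem_setOf_eq, Prod.fst_swap, Prod.snd_swap] at h1 h2
    rcases h1 with ⟨h, h'⟩ | ⟨h, h'⟩ <;> rcases h2 with ⟨g, g'⟩ | ⟨g, g'⟩ <;> linarith
  have hGsub : G ∪ G' ⊆ Icc (0:ℝ) 1 ×ˢ Icc (0:ℝ) 1 := by
    rintro ⟨x, y⟩ (⟨h, -⟩ | ⟨h, -⟩)
    · exact h
    · exact ⟨h.2, h.1⟩
  have hGhalf : volume G + volume G ≤ 1 := by
    nth_rewrite 2 [← hG']
    rw [← measure_union hdisj (hGm.preimage measurable_swap)]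
    exact hbox ▸ measure_mono hGsub
  have hEFsub : E ∩ F ⊆ G := by
    rintro ⟨x, y⟩ ⟨⟨hb, h1⟩, h2⟩
    simp only [hF, Set.mem_preimage, hTdef, hE, Set.mem_setOf_eq] at h2
    obtain ⟨-, h2⟩ := h2
    refine ⟨hb, ?_⟩
    rcases h1 with ⟨hxA, hlt⟩ | ⟨hxA, hlt⟩
    · rcases h2 with ⟨-, hlt2⟩ | ⟨hxA', -⟩
      · exact Or.inl ⟨hlt, by simp only at hlt2 ⊢; linarith⟩
      · exact absurd hxA hxA'
    · rcases h2 with ⟨hxA', -⟩ | ⟨-, hlt2⟩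
      · exact absurd hxA' hxA
      · exact Or.inr ⟨hlt, by simp only at hlt2 ⊢; linarith⟩
  have hEFbox : E ∪ F ⊆ Icc (0:ℝ) 1 ×ˢ Icc (0:ℝ) 1 := by
    rintro ⟨x, y⟩ (⟨hb, -⟩ | h)
    · exact hb
    · simp only [hF, Set.mem_preimage, hTdef, hE, Set.mem_setOf_eq, Set.mem_prod,
        Set.mem_Icc] at h ⊢
      obtain ⟨⟨hx, hy⟩, -⟩ := h
      exact ⟨hx, by linarith [hy.1, hy.2], by linarith [hy.1, hy.2]⟩
  have h2 : volume (E ∩ F) ≤ 1/2 := by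
    refine le_trans (measure_mono hEFsub) ?_
    have h2G : 2 * volume G ≤ 1 := by rw [two_mul]; exact hGhalf
    have := ENNReal.div_le_div_right h2G 2
    rwa [mul_div_assoc, ENNReal.mul_div_cancel' (by norm_num) (by norm_num)] at this
  have h1 : volume (E ∪ F) ≤ 1 := hbox ▸ measure_mono hEFbox
  have key : volume E + volume E ≤ 3/2 := by
    nth_rewrite 2 [← hFE]
    rw [← measure_union_add_inter E (hEm.preimage hTmeas)]
    refine le_trans (add_le_add h1 h2) ?_
    rw [show (1:ENNReal) + 1/2 = 3/2 by
      rw [ENNReal.eq_div_iff (by norm_num) (by norm_num), mul_add,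
        ENNReal.mul_div_cancel' (by norm_num) (by norm_num)]; norm_num]
  rw [← two_mul] at key
  have := ENNReal.div_le_div_right key 2
  rw [mul_div_assoc, ENNReal.mul_div_cancel' (by norm_num) (by norm_num)] at this
  refine le_trans this ?_
  rw [div_eq_mul_inv, div_eq_mul_inv, div_eq_mul_inv, mul_assoc,
    ← ENNReal.mul_inv (by norm_num) (by norm_num)]
  norm_num
end

section
/- Let X ~ Uni(0,8), Z ~ Uni(0,4), Z' ~ Uni(0,4), and Y ~ Uni(0,1) be independent random variables, and set R := max(X − Z, 0). Then P( (R < Z' and R < Y) or (Z' < R and Y < R) ) = 77/96. Equivalently, the four-dimensional Lebesgue measure of the set {(x,z,z',y) ∈ [0,8]×[0,4]×[0,4]×[0,1] : (max(x−z,0) < z' and max(x−z,0) < y) or (z' < max(x−z,0) and y < max(x−z,0))} equals (77/96)·128 = 308/3. -/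
open MeasureTheory Set
open scoped ENNReal

/-- The uniform probability measure on the real interval `[a, b]`:
normalized Lebesgue measure restricted to `Icc a b`. -/
noncomputable def unif (a b : ℝ) : Measure ℝ :=
  (volume (Set.Icc a b))⁻¹ • volume.restrict (Set.Icc a b)

instance (a b : ℝ) : SFinite (unif a b) := by unfold unif; infer_instance


noncomputable def f₂ (r : ℝ) : ℝ := max (4-r) 0 * max (1-r) 0 + min r 4 * min r 1

lemma f₂_cont : Continuous f₂ := by unfold f₂; fun_prop

lemma f₂_nonneg (r : ℝ) : 0 ≤ f₂ r := by
  rcases le_or_gt 0 r with h | h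
  · have h1 : (0:ℝ) ≤ min r 4 := le_min h (by norm_num)
    have h2 : (0:ℝ) ≤ min r 1 := le_min h (by norm_num)
    unfold f₂; positivity
  · have h1 : min r 4 = r := min_eq_left (by linarith)
    have h2 : min r 1 = r := min_eq_left (by linarith)
    unfold f₂; rw [h1, h2]
    nlinarith [mul_nonneg (le_max_right (4-r) (0:ℝ)) (le_max_right (1-r) (0:ℝ))]


lemma f₂_zero : f₂ 0 = 4 := by norm_num [f₂]

lemma f₂_low {r : ℝ} (h0 : 0 ≤ r) (h1 : r ≤ 1) : f₂ r = (4-r)*(1-r) + r*r := by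
  unfold f₂
  rw [max_eq_left (by linarith), max_eq_left (by linarith), min_eq_left (by linarith),
    min_eq_left h1]

lemma f₂_mid {r : ℝ} (h1 : 1 ≤ r) (h4 : r ≤ 4) : f₂ r = r := by
  unfold f₂
  rw [max_eq_right (by linarith : 1 - r ≤ 0), mul_zero, min_eq_left h4,
    min_eq_right h1, zero_add, mul_one]

lemma f₂_high {r : ℝ} (h : 4 ≤ r) : f₂ r = 4 := by
  unfold f₂
  rw [max_eq_right (by linarith : 4 - r ≤ 0), zero_mul, min_eq_right h,
    min_eq_right (by linarith : 1 ≤ r), zero_add, mul_one]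

lemma key (z : ℝ) (hz0 : 0 ≤ z) (hz4 : z ≤ 4) :
    ∫ x in Icc (0:ℝ) 8, f₂ (max (x - z) 0) = 77/3 := by
  have hc : Continuous fun r : ℝ => f₂ (max r 0) :=
    f₂_cont.comp (continuous_id.max continuous_const)
  have hI : ∀ a b : ℝ, IntervalIntegrable (fun r => f₂ (max r 0)) volume a b :=
    fun a b => hc.intervalIntegrable a b
  rw [integral_Icc_eq_integral_Ioc, ← intervalIntegral.integral_of_le (by norm_num : (0:ℝ) ≤ 8)]
  have hsub := intervalIntegral.integral_comp_sub_right (a := 0) (b := 8)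
    (fun r => f₂ (max r 0)) z
  simp only [zero_sub] at hsub
  rw [hsub]
  rw [← intervalIntegral.integral_add_adjacent_intervals (a := -z) (b := 0) (c := 8 - z)
      (hI _ _) (hI _ _),
    ← intervalIntegral.integral_add_adjacent_intervals (a := (0:ℝ)) (b := 1) (c := 8 - z)
      (hI _ _) (hI _ _),
    ← intervalIntegral.integral_add_adjacent_intervals (a := (1:ℝ)) (b := 4) (c := 8 - z)
      (hI _ _) (hI _ _)]
  have p1 : ∫ r in (-z)..0, f₂ (max r 0) = z * 4 := by
    rw [intervalIntegral.integral_congr (g := fun _ => (4:ℝ)) ?_, intervalIntegral.integral_const]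
    · rw [smul_eq_mul]; ring
    · intro r hr
      rw [uIcc_of_le (neg_nonpos.2 hz0)] at hr
      show f₂ (max r 0) = 4
      rw [max_eq_right hr.2, f₂_zero]
  have p2 : ∫ r in (0:ℝ)..1, f₂ (max r 0) = 13/6 := by
    rw [intervalIntegral.integral_congr (g := fun r => (4-r)*(1-r) + r*r) ?_]
    · rw [intervalIntegral.integral_eq_sub_of_hasDerivAt
        (f := fun r : ℝ => 2/3*r^3 - 5/2*r^2 + 4*r) ?_ (by apply Continuous.intervalIntegrable; continuity)]
      · norm_num
      · intro x _
        have h1 : HasDerivAt (fun r : ℝ => 2/3*r^3 - 5/2*r^2 + 4*r)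
            (2/3*(↑3*x^(3-1)) - 5/2*(↑2*x^(2-1)) + 4*1) x :=
          (((hasDerivAt_pow 3 x).const_mul (2/3 : ℝ)).sub
            ((hasDerivAt_pow 2 x).const_mul (5/2 : ℝ))).add ((hasDerivAt_id x).const_mul 4)
        refine h1.congr_deriv ?_
        push_cast
        ring
    · intro r hr
      rw [uIcc_of_le (by norm_num : (0:ℝ) ≤ 1)] at hr
      obtain ⟨h0, h1⟩ := hr
      show f₂ (max r 0) = (4-r)*(1-r) + r*r
      rw [max_eq_left h0, f₂_low h0 h1]
  have p3 : ∫ r in (1:ℝ)..4, f₂ (max r 0) = 15/2 := by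
    rw [intervalIntegral.integral_congr (g := fun r => r) ?_]
    · rw [integral_id]; norm_num
    · intro r hr
      rw [uIcc_of_le (by norm_num : (1:ℝ) ≤ 4)] at hr
      obtain ⟨h1, h4⟩ := hr
      show f₂ (max r 0) = r
      rw [max_eq_left (by linarith), f₂_mid h1 h4]
  have p4 : ∫ r in (4:ℝ)..(8-z), f₂ (max r 0) = (4 - z) * 4 := by
    rw [intervalIntegral.integral_congr (g := fun _ => (4:ℝ)) ?_, intervalIntegral.integral_const]
    · rw [smul_eq_mul]; ring
    · intro r hr
      rw [uIcc_of_le (by linarith : (4:ℝ) ≤ 8 - z)] at hr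
      obtain ⟨h4, _⟩ := hr
      show f₂ (max r 0) = 4
      rw [max_eq_left (by linarith), f₂_high h4]
  rw [p1, p2, p3, p4]
  ring

noncomputable def g (r : ℝ) : ℝ≥0∞ :=
  ENNReal.ofReal (4-r) * ENNReal.ofReal (1-r) + ENNReal.ofReal (min r 4) * ENNReal.ofReal (min r 1)

lemma g_meas : Measurable g := by unfold g; fun_prop

lemma ofReal_max (a : ℝ) : ENNReal.ofReal a = ENNReal.ofReal (max a 0) := by
  rcases le_total a 0 with h | h
  · rw [max_eq_right h, ENNReal.ofReal_eq_zero.2 h, ENNReal.ofReal_zero]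
  · rw [max_eq_left h]

lemma g_eq {r : ℝ} (hr : 0 ≤ r) : g r = ENNReal.ofReal (f₂ r) := by
  have h1 : (0:ℝ) ≤ min r 4 := le_min hr (by norm_num)
  have h3 : (0:ℝ) ≤ max (4-r) 0 * max (1-r) 0 := mul_nonneg (le_max_right _ _) (le_max_right _ _)
  have h4 : (0:ℝ) ≤ min r 4 * min r 1 := mul_nonneg h1 (le_min hr (by norm_num))
  unfold g f₂
  rw [ENNReal.ofReal_add h3 h4, ENNReal.ofReal_mul (le_max_right _ _),
    ENNReal.ofReal_mul h1, ← ofReal_max (4-r), ← ofReal_max (1-r)]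

def S₂ (r : ℝ) : Set (ℝ × ℝ) :=
  ((Icc (0:ℝ) 4 ∩ Ioi r) ×ˢ (Icc (0:ℝ) 1 ∩ Ioi r)) ∪ ((Icc (0:ℝ) 4 ∩ Iio r) ×ˢ (Icc (0:ℝ) 1 ∩ Iio r))

lemma vol_inter_Ioi (a r : ℝ) (hr : 0 ≤ r) :
    volume (Icc 0 a ∩ Ioi r) = ENNReal.ofReal (a - r) := by
  have : Icc 0 a ∩ Ioi r = Ioc r a := by
    ext t
    simp only [mem_inter_iff, mem_Icc, mem_Ioi, mem_Ioc]
    constructor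
    · rintro ⟨⟨_, h2⟩, h3⟩; exact ⟨h3, h2⟩
    · rintro ⟨h1, h2⟩; exact ⟨⟨le_of_lt (lt_of_le_of_lt hr h1), h2⟩, h1⟩
  rw [this, Real.volume_Ioc]

lemma vol_inter_Iio (a r : ℝ) : volume (Icc 0 a ∩ Iio r) = ENNReal.ofReal (min r a) := by
  rcases le_or_gt r a with h | h
  · have : Icc 0 a ∩ Iio r = Ico 0 r := by
      ext t
      simp only [mem_inter_iff, mem_Icc, mem_Iio, mem_Ico]
      constructor
      · rintro ⟨⟨h1, _⟩, h3⟩; exact ⟨h1, h3⟩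
      · rintro ⟨h1, h2⟩; exact ⟨⟨h1, le_trans (le_of_lt h2) h⟩, h2⟩
    rw [this, Real.volume_Ico, min_eq_left h, sub_zero]
  · have : Icc 0 a ∩ Iio r = Icc 0 a :=
      inter_eq_left.2 fun t ht => lt_of_le_of_lt ht.2 h
    rw [this, Real.volume_Icc, min_eq_right (le_of_lt h), sub_zero]

lemma vol_S₂ {r : ℝ} (hr : 0 ≤ r) : volume (S₂ r) = g r := by
  unfold S₂
  rw [measure_union ?hd ?hm]
  · rw [Measure.volume_eq_prod, Measure.prod_prod, Measure.prod_prod,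
      vol_inter_Ioi 4 r hr, vol_inter_Ioi 1 r hr, vol_inter_Iio 4 r, vol_inter_Iio 1 r, g]
  case hd =>
    rw [Set.disjoint_left]
    rintro ⟨a, b⟩ h1 h2
    exact absurd (show a < r from h2.1.2) (lt_asymm (show r < a from h1.1.2))
  case hm =>
    exact ((measurableSet_Icc.inter measurableSet_Iio).prod
      (measurableSet_Icc.inter measurableSet_Iio))


lemma inner_lint (z : ℝ) (hz : z ∈ Icc (0:ℝ) 4) :
    ∫⁻ x in Icc (0:ℝ) 8, g (max (x - z) 0) = ENNReal.ofReal (77/3) := by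
  have h1 : ∀ x : ℝ, g (max (x - z) 0) = ENNReal.ofReal (f₂ (max (x - z) 0)) :=
    fun x => g_eq (le_max_right _ _)
  simp_rw [h1]
  have hcont : Continuous fun x : ℝ => f₂ (max (x - z) 0) :=
    f₂_cont.comp ((continuous_id.sub continuous_const).max continuous_const)
  have hInt : IntegrableOn (fun x : ℝ => f₂ (max (x - z) 0)) (Icc 0 8) := hcont.integrableOn_Icc
  rw [← ofReal_integral_eq_lintegral_ofReal hInt (ae_of_all _ fun x => f₂_nonneg _),
    key z hz.1 hz.2]


def Econd : Set (ℝ × ℝ × ℝ × ℝ) :=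
  {p : ℝ × ℝ × ℝ × ℝ |
          (max (p.1 - p.2.1) 0 < p.2.2.1 ∧ max (p.1 - p.2.1) 0 < p.2.2.2) ∨
          (p.2.2.1 < max (p.1 - p.2.1) 0 ∧ p.2.2.2 < max (p.1 - p.2.1) 0)}

def Ebox : Set (ℝ × ℝ × ℝ × ℝ) := Icc (0:ℝ) 8 ×ˢ (Icc (0:ℝ) 4 ×ˢ (Icc (0:ℝ) 4 ×ˢ Icc (0:ℝ) 1))

lemma hEcond : MeasurableSet Econd := by
  have hR : Measurable fun p : ℝ×ℝ×ℝ×ℝ => max (p.1 - p.2.1) 0 := by fun_prop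
  have h1 : Measurable fun p : ℝ×ℝ×ℝ×ℝ => p.2.2.1 := by fun_prop
  have h2 : Measurable fun p : ℝ×ℝ×ℝ×ℝ => p.2.2.2 := by fun_prop
  exact ((measurableSet_lt hR h1).inter (measurableSet_lt hR h2)).union
    ((measurableSet_lt h1 hR).inter (measurableSet_lt h2 hR))

lemma hEbox : MeasurableSet Ebox :=
  measurableSet_Icc.prod (measurableSet_Icc.prod (measurableSet_Icc.prod measurableSet_Icc))

lemma slice_eq (x z : ℝ) :
    (Prod.mk z ⁻¹' (Prod.mk x ⁻¹' (Ebox ∩ Econd))) =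
    if x ∈ Icc (0:ℝ) 8 ∧ z ∈ Icc (0:ℝ) 4 then S₂ (max (x-z) 0) else ∅ := by
  split_ifs with h
  · obtain ⟨hx, hz⟩ := h
    ext ⟨z', y⟩
    simp only [mem_preimage, mem_inter_iff, Ebox, Econd, mem_prod, mem_setOf_eq, S₂, mem_union,
      mem_Ioi, mem_Iio]
    tauto
  · ext ⟨z', y⟩
    simp only [mem_preimage, mem_inter_iff, Ebox, Econd, mem_prod, mem_setOf_eq, S₂, mem_union,
      mem_Ioi, mem_Iio, mem_empty_iff_false, iff_false]
    push_neg at h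
    tauto

lemma vol_E : volume (Ebox ∩ Econd) = 308/3 := by
  have hE : MeasurableSet (Ebox ∩ Econd) := hEbox.inter hEcond
  rw [Measure.volume_eq_prod, Measure.prod_apply hE]
  have step1 : ∀ x : ℝ, (volume : Measure (ℝ × ℝ × ℝ)) (Prod.mk x ⁻¹' (Ebox ∩ Econd)) =
      (Icc (0:ℝ) 8).indicator (fun x => ∫⁻ z in Icc (0:ℝ) 4, g (max (x - z) 0)) x := by
    intro x
    have hE1 : MeasurableSet (Prod.mk x ⁻¹' (Ebox ∩ Econd)) :=
      hE.preimage measurable_prodMk_left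
    rw [Measure.volume_eq_prod, Measure.prod_apply hE1]
    by_cases hx : x ∈ Icc (0:ℝ) 8
    · rw [indicator_of_mem hx, ← lintegral_indicator measurableSet_Icc]
      apply lintegral_congr
      intro z
      rw [show (Prod.mk z ⁻¹' (Prod.mk x ⁻¹' (Ebox ∩ Econd))) =
        (if x ∈ Icc (0:ℝ) 8 ∧ z ∈ Icc (0:ℝ) 4 then S₂ (max (x-z) 0) else ∅) from slice_eq x z]
      by_cases hzz : z ∈ Icc (0:ℝ) 4
      · rw [if_pos ⟨hx, hzz⟩, indicator_of_mem hzz, vol_S₂ (le_max_right _ _)]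
      · rw [if_neg (fun hh => hzz hh.2), indicator_of_notMem hzz, measure_empty]
    · rw [indicator_of_notMem hx]
      have hz0 : ∀ z : ℝ, (volume : Measure (ℝ × ℝ)) (Prod.mk z ⁻¹' (Prod.mk x ⁻¹' (Ebox ∩ Econd))) = 0 := by
        intro z
        rw [slice_eq x z, if_neg (fun hh => hx hh.1), measure_empty]
      rw [lintegral_congr hz0, lintegral_zero]
  rw [lintegral_congr step1, lintegral_indicator measurableSet_Icc]
  have hmeas : AEMeasurable (fun p : ℝ × ℝ => g (max (p.1 - p.2) 0))
      ((volume.restrict (Icc (0:ℝ) 8)).prod (volume.restrict (Icc (0:ℝ) 4))) :=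
    (g_meas.comp ((measurable_fst.sub measurable_snd).max measurable_const)).aemeasurable
  have hswap : (∫⁻ x in Icc (0:ℝ) 8, ∫⁻ z in Icc (0:ℝ) 4, g (max (x - z) 0)) =
      ∫⁻ z in Icc (0:ℝ) 4, ∫⁻ x in Icc (0:ℝ) 8, g (max (x - z) 0) :=
    lintegral_lintegral_swap hmeas
  rw [hswap, setLIntegral_congr_fun measurableSet_Icc inner_lint,
    setLIntegral_const, Real.volume_Icc]
  rw [show (4:ℝ) - 0 = 4 by norm_num, ← ENNReal.ofReal_mul (by norm_num)]
  rw [show (77:ℝ)/3 * 4 = 308/3 by norm_num]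
  rw [ENNReal.ofReal_div_of_pos (by norm_num)]
  norm_num




lemma prod_smul_left' {α β : Type*} [MeasurableSpace α] [MeasurableSpace β] (c : ℝ≥0∞)
    (μ : Measure α) (ν : Measure β) [SFinite μ] [SFinite ν] :
    (c • μ).prod ν = c • μ.prod ν := by
  ext s hs
  rw [Measure.prod_apply hs, Measure.smul_apply, Measure.prod_apply hs,
    lintegral_smul_measure, smul_eq_mul]

lemma prod_smul_right' {α β : Type*} [MeasurableSpace α] [MeasurableSpace β] (c : ℝ≥0∞)
    (μ : Measure α) (ν : Measure β) [SFinite μ] [SFinite ν] :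
    μ.prod (c • ν) = c • μ.prod ν := by
  ext s hs
  simp_rw [Measure.smul_apply, Measure.prod_apply hs, Measure.smul_apply, smul_eq_mul]
  rw [lintegral_const_mul _ (measurable_measure_prodMk_left hs)]

theorem part1 :
    ((unif 0 8).prod ((unif 0 4).prod ((unif 0 4).prod (unif 0 1))))
        {p : ℝ × ℝ × ℝ × ℝ |
          (max (p.1 - p.2.1) 0 < p.2.2.1 ∧ max (p.1 - p.2.1) 0 < p.2.2.2) ∨
          (p.2.2.1 < max (p.1 - p.2.1) 0 ∧ p.2.2.2 < max (p.1 - p.2.1) 0)} = 77/96 := by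
  have hfold : {p : ℝ × ℝ × ℝ × ℝ |
          (max (p.1 - p.2.1) 0 < p.2.2.1 ∧ max (p.1 - p.2.1) 0 < p.2.2.2) ∨
          (p.2.2.1 < max (p.1 - p.2.1) 0 ∧ p.2.2.2 < max (p.1 - p.2.1) 0)} = Econd := rfl
  rw [hfold]
  unfold unif
  simp only [prod_smul_left', prod_smul_right']
  rw [Measure.prod_restrict, Measure.prod_restrict, Measure.prod_restrict]
  have hvol : ((volume : Measure ℝ).prod
      ((volume : Measure ℝ).prod ((volume : Measure ℝ).prod (volume : Measure ℝ)))) =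
      (volume : Measure (ℝ × ℝ × ℝ × ℝ)) := by
    rw [Measure.volume_eq_prod, Measure.volume_eq_prod, Measure.volume_eq_prod]
  rw [hvol]
  have hset : Econd ∩ Ebox = Ebox ∩ Econd := inter_comm _ _
  simp only [Measure.smul_apply, smul_eq_mul]
  rw [Measure.restrict_apply hEcond]
  show _ * (_ * (_ * (_ * (volume (Econd ∩ Ebox))))) = 77/96
  rw [hset, vol_E]
  simp only [Real.volume_Icc, sub_zero, ENNReal.ofReal_one, inv_one, one_mul,
    ENNReal.ofReal_ofNat]
  have i4 : ((4:ℝ≥0∞))⁻¹ ≠ ⊤ := ENNReal.inv_ne_top.2 (by norm_num)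
  have i8 : ((8:ℝ≥0∞))⁻¹ ≠ ⊤ := ENNReal.inv_ne_top.2 (by norm_num)
  have hdiv : ((308:ℝ≥0∞)/3) ≠ ⊤ := (ENNReal.div_lt_top (by norm_num) (by norm_num)).ne
  refine (ENNReal.toReal_eq_toReal_iff' ?_ ?_).1 ?_
  · exact ENNReal.mul_ne_top i4 (ENNReal.mul_ne_top i4 (ENNReal.mul_ne_top i8 hdiv))
  · exact (ENNReal.div_lt_top (by norm_num) (by norm_num)).ne
  · simp only [ENNReal.toReal_mul, ENNReal.toReal_inv, ENNReal.toReal_div,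
      ENNReal.toReal_ofNat]
    norm_num


/-- Let `X ~ Uni(0,8)`, `Z ~ Uni(0,4)`, `Z' ~ Uni(0,4)`, `Y ~ Uni(0,1)` be independent
(modelled by the product measure, with `p = (x, z, z', y)`), and let `R := max (X - Z) 0`.
Then `P((R < Z' ∧ R < Y) ∨ (Z' < R ∧ Y < R)) = 77/96`.  Equivalently, the four-dimensional
Lebesgue measure of the corresponding subset of `[0,8] × [0,4] × [0,4] × [0,1]` equals
`(77/96) · 128 = 308/3`. -/
theorem stmt_2 :
    ((unif 0 8).prod ((unif 0 4).prod ((unif 0 4).prod (unif 0 1))))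
        {p : ℝ × ℝ × ℝ × ℝ |
          (max (p.1 - p.2.1) 0 < p.2.2.1 ∧ max (p.1 - p.2.1) 0 < p.2.2.2) ∨
          (p.2.2.1 < max (p.1 - p.2.1) 0 ∧ p.2.2.2 < max (p.1 - p.2.1) 0)} = 77/96 ∧
    volume {p : ℝ × ℝ × ℝ × ℝ |
          p ∈ Icc (0:ℝ) 8 ×ˢ (Icc (0:ℝ) 4 ×ˢ (Icc (0:ℝ) 4 ×ˢ Icc (0:ℝ) 1)) ∧
          ((max (p.1 - p.2.1) 0 < p.2.2.1 ∧ max (p.1 - p.2.1) 0 < p.2.2.2) ∨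
           (p.2.2.1 < max (p.1 - p.2.1) 0 ∧ p.2.2.2 < max (p.1 - p.2.1) 0))} = 308/3 :=
  ⟨part1, vol_E⟩
end

section
/- Let X ~ Uni(0,8), Z ~ Uni(0,4), Z' ~ Uni(0,4), and Y ~ Uni(0,1) be independent random variables, and set R := max(X − Z, 0) and T := min(X, Z). Then P( (R < Z' and T < 35/12 and R < Y) or (not(R < Z' and T < 35/12) and Y < R) ) = 7561/9216. In particular, 7561/9216 > 77/96. -/
open MeasureTheory Set intervalIntegral
open scoped ENNReal

namespace Stmt3Aux

/-! ### Auxiliary real functions -/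

noncomputable def phi (r : ℝ) : ℝ := (max (1 - r) 0 * (4 - r) + min r 1 * min 4 r) / 4

noncomputable def psi (r : ℝ) : ℝ := min r 1

noncomputable def G (x z : ℝ) : ℝ :=
  if min x z < 35 / 12 then phi (max (x - z) 0) else psi (max (x - z) 0)

lemma phi_cont : Continuous phi := by unfold phi; fun_prop

lemma psi_cont : Continuous psi := by unfold psi; fun_prop

lemma phi_nonneg {r : ℝ} (hr : 0 ≤ r) : 0 ≤ phi r := by
  have ht1 : 0 ≤ max (1 - r) 0 * (4 - r) := by
    rcases le_total r 4 with h | h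
    · exact mul_nonneg (le_max_right _ _) (by linarith)
    · rw [max_eq_right (by linarith : 1 - r ≤ 0)]; simp
  have ht2 : 0 ≤ min r 1 * min 4 r :=
    mul_nonneg (le_min hr zero_le_one) (le_min (by norm_num) hr)
  unfold phi; linarith

lemma phi_le_two {r : ℝ} (hr : 0 ≤ r) : phi r ≤ 2 := by
  have ht1 : max (1 - r) 0 * (4 - r) ≤ 4 := by
    rcases le_total r 4 with h | h
    · calc max (1 - r) 0 * (4 - r) ≤ 1 * 4 :=
            mul_le_mul (max_le (by linarith) (by norm_num)) (by linarith) (by linarith)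
              (by norm_num)
        _ = 4 := by norm_num
    · rw [max_eq_right (by linarith : 1 - r ≤ 0)]; norm_num
  have ht2 : min r 1 * min 4 r ≤ 4 := by
    calc min r 1 * min 4 r ≤ 1 * 4 :=
          mul_le_mul (min_le_right _ _) (min_le_left _ _) (le_min (by norm_num) hr)
            (by norm_num)
      _ = 4 := by norm_num
  unfold phi; linarith

lemma psi_nonneg {r : ℝ} (hr : 0 ≤ r) : 0 ≤ psi r := le_min hr zero_le_one

lemma psi_le_one (r : ℝ) : psi r ≤ 1 := min_le_right _ _

lemma phi_zero : phi 0 = 1 := by norm_num [phi]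

lemma G_nonneg (x z : ℝ) : 0 ≤ G x z := by
  unfold G
  split_ifs
  · exact phi_nonneg (le_max_right _ _)
  · exact psi_nonneg (le_max_right _ _)

lemma G_le_two (x z : ℝ) : G x z ≤ 2 := by
  unfold G
  split_ifs
  · exact phi_le_two (le_max_right _ _)
  · exact le_trans (psi_le_one _) (by norm_num)

/-! ### Basic facts about `unif` -/

lemma unif_apply {a b : ℝ} {s : Set ℝ} (hs : MeasurableSet s) :
    unif a b s = (ENNReal.ofReal (b - a))⁻¹ * volume (s ∩ Icc a b) := by
  simp [unif, Measure.smul_apply, Measure.restrict_apply hs, Real.volume_Icc, smul_eq_mul]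

lemma lintegral_unif (a b : ℝ) (f : ℝ → ℝ≥0∞) :
    ∫⁻ t, f t ∂unif a b = (ENNReal.ofReal (b - a))⁻¹ * ∫⁻ t in Icc a b, f t := by
  simp [unif, lintegral_smul_measure, Real.volume_Icc, smul_eq_mul]

/-! ### The innermost integral (over `y`) -/

lemma yA (r : ℝ) (hr : 0 ≤ r) (A : Prop) [Decidable A] :
    unif 0 1 {y : ℝ | (A ∧ r < y) ∨ (¬A ∧ y < r)} =
      if A then ENNReal.ofReal (1 - r) else ENNReal.ofReal (min r 1) := by
  by_cases hA : A
  · have hset : {y : ℝ | (A ∧ r < y) ∨ (¬A ∧ y < r)} = Ioi r := by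
      ext y; simp [hA, mem_Ioi]
    rw [hset, unif_apply measurableSet_Ioi, if_pos hA]
    have h2 : Ioi r ∩ Icc (0 : ℝ) 1 = Ioc r 1 := by
      ext y
      simp only [mem_inter_iff, mem_Ioi, mem_Icc, mem_Ioc]
      constructor
      · rintro ⟨h1, _, h3⟩; exact ⟨h1, h3⟩
      · rintro ⟨h1, h2⟩; exact ⟨h1, le_of_lt (lt_of_le_of_lt hr h1), h2⟩
    rw [h2, Real.volume_Ioc]
    norm_num
  · have hset : {y : ℝ | (A ∧ r < y) ∨ (¬A ∧ y < r)} = Iio r := by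
      ext y; simp [hA, mem_Iio]
    rw [hset, unif_apply measurableSet_Iio, if_neg hA]
    rcases le_or_gt r 1 with h | h
    · have h2 : Iio r ∩ Icc (0 : ℝ) 1 = Ico 0 r := by
        ext y
        simp only [mem_inter_iff, mem_Iio, mem_Icc, mem_Ico]
        constructor
        · rintro ⟨h1, h2, _⟩; exact ⟨h2, h1⟩
        · rintro ⟨h1, h2⟩; exact ⟨h2, h1, le_trans (le_of_lt h2) h⟩
      rw [h2, Real.volume_Ico, min_eq_left h]
      norm_num
    · have h2 : Iio r ∩ Icc (0 : ℝ) 1 = Icc 0 1 := by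
        ext y
        simp only [mem_inter_iff, mem_Iio, mem_Icc]
        exact ⟨fun hy => hy.2, fun h2 => ⟨lt_of_le_of_lt h2.2 h, h2⟩⟩
      rw [h2, Real.volume_Icc, min_eq_right (le_of_lt h)]
      norm_num

/-! ### The integral over `z'` -/

lemma zstep (r : ℝ) (hr : 0 ≤ r) (B : Prop) [Decidable B] :
    (∫⁻ t, (if r < t ∧ B then ENNReal.ofReal (1 - r) else ENNReal.ofReal (min r 1)) ∂unif 0 4)
      = ENNReal.ofReal (if B then phi r else psi r) := by
  by_cases hB : B
  · rw [lintegral_unif, if_pos hB]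
    have hsplit : Icc (0 : ℝ) 4 = (Icc 0 4 ∩ Ioi r) ∪ (Icc 0 4 ∩ Iic r) := by
      rw [← Set.compl_Ioi, Set.inter_union_compl]
    have hdisj : Disjoint (Icc (0:ℝ) 4 ∩ Ioi r) (Icc 0 4 ∩ Iic r) := by
      apply Set.disjoint_left.mpr
      rintro t ⟨_, h1⟩ ⟨_, h2⟩
      exact absurd (show t ≤ r from h2) (not_le.mpr (show r < t from h1))
    rw [hsplit, lintegral_union (measurableSet_Icc.inter measurableSet_Iic) hdisj]
    have e1 : ∫⁻ t in Icc (0:ℝ) 4 ∩ Ioi r,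
        (if r < t ∧ B then ENNReal.ofReal (1 - r) else ENNReal.ofReal (min r 1))
        = ENNReal.ofReal (1 - r) * volume (Icc (0:ℝ) 4 ∩ Ioi r) := by
      rw [setLIntegral_congr_fun (measurableSet_Icc.inter measurableSet_Ioi)
        (fun t ht => if_pos ⟨ht.2, hB⟩), setLIntegral_const]
    have e2 : ∫⁻ t in Icc (0:ℝ) 4 ∩ Iic r,
        (if r < t ∧ B then ENNReal.ofReal (1 - r) else ENNReal.ofReal (min r 1))
        = ENNReal.ofReal (min r 1) * volume (Icc (0:ℝ) 4 ∩ Iic r) := by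
      rw [setLIntegral_congr_fun (measurableSet_Icc.inter measurableSet_Iic)
        (fun t ht => if_neg (fun hc => absurd ht.2 (not_le.mpr hc.1))),
        setLIntegral_const]
    rw [e1, e2]
    have v1 : Icc (0:ℝ) 4 ∩ Ioi r = Ioc r 4 := by
      ext t
      simp only [mem_inter_iff, mem_Icc, mem_Ioi, mem_Ioc]
      constructor
      · rintro ⟨⟨_, h2⟩, h3⟩; exact ⟨h3, h2⟩
      · rintro ⟨h1, h2⟩; exact ⟨⟨le_of_lt (lt_of_le_of_lt hr h1), h2⟩, h1⟩
    have v2 : Icc (0:ℝ) 4 ∩ Iic r = Icc 0 (min 4 r) := by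
      ext t
      simp only [mem_inter_iff, mem_Icc, mem_Iic, le_min_iff]
      tauto
    rw [v1, v2, Real.volume_Ioc, Real.volume_Icc]
    have m1 : ENNReal.ofReal (1 - r) * ENNReal.ofReal (4 - r)
        = ENNReal.ofReal (max (1 - r) 0 * (4 - r)) := by
      rcases le_total r 1 with h | h
      · rw [max_eq_left (by linarith : (0:ℝ) ≤ 1 - r), ENNReal.ofReal_mul (by linarith)]
      · rw [max_eq_right (by linarith : 1 - r ≤ 0), zero_mul, ENNReal.ofReal_zero,
          ENNReal.ofReal_eq_zero.mpr (by linarith : 1 - r ≤ 0), zero_mul]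
    have m2 : ENNReal.ofReal (min r 1) * ENNReal.ofReal (min 4 r - 0)
        = ENNReal.ofReal (min r 1 * min 4 r) := by
      rw [sub_zero, ENNReal.ofReal_mul (le_min hr zero_le_one)]
    rw [m1, m2, ← ENNReal.ofReal_add]
    · unfold phi
      rw [ENNReal.ofReal_div_of_pos (by norm_num : (0:ℝ) < 4), ENNReal.div_eq_inv_mul]
      norm_num
    · rcases le_total r 4 with h | h
      · exact mul_nonneg (le_max_right _ _) (by linarith)
      · rw [max_eq_right (by linarith : 1 - r ≤ 0)]; simp
    · exact mul_nonneg (le_min hr zero_le_one) (le_min (by norm_num) hr)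
  · have heq : ∀ t : ℝ, (if r < t ∧ B then ENNReal.ofReal (1 - r) else ENNReal.ofReal (min r 1))
        = ENNReal.ofReal (min r 1) := fun t => if_neg (fun hc => hB hc.2)
    rw [lintegral_congr heq, lintegral_const, if_neg hB]
    have huniv : unif 0 4 univ = 1 := by
      rw [unif_apply MeasurableSet.univ, Set.univ_inter, Real.volume_Icc]
      rw [ENNReal.inv_mul_cancel] <;> simp
    rw [huniv, mul_one]
    rfl

/-! ### Polynomial interval integrals -/

lemma integral_poly2 (a b p q r : ℝ) :
    ∫ u in a..b, (p + q * u + r * u ^ 2) = p * (b - a) + q * (b ^ 2 - a ^ 2) / 2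
      + r * (b ^ 3 - a ^ 3) / 3 := by
  have key : ∀ u : ℝ, HasDerivAt (fun v : ℝ => p * v ^ 1 + q / 2 * v ^ 2 + r / 3 * v ^ 3)
      (p + q * u + r * u ^ 2) u := by
    intro u
    have h := (((hasDerivAt_pow 1 u).const_mul p).add
      ((hasDerivAt_pow 2 u).const_mul (q / 2))).add ((hasDerivAt_pow 3 u).const_mul (r / 3))
    refine h.congr_deriv ?_
    push_cast
    ring
  rw [intervalIntegral.integral_eq_sub_of_hasDerivAt (fun u _ => key u)
      (Continuous.intervalIntegrable (by fun_prop) a b)]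
  ring

/-! ### The inner integral over `x` -/

lemma G_meas (z : ℝ) : Measurable fun x => G x z := by
  unfold G
  exact Measurable.ite (measurableSet_lt (by fun_prop) measurable_const)
    (phi_cont.comp (by fun_prop)).measurable (psi_cont.comp (by fun_prop)).measurable

lemma G_intOn (z : ℝ) : IntegrableOn (fun x => G x z) (Icc (0:ℝ) 8) volume := by
  apply Measure.integrableOn_of_bounded measure_Icc_lt_top.ne
    (G_meas z).aestronglyMeasurable (M := 2)
  exact ae_of_all _ fun x => by
    rw [Real.norm_eq_abs, abs_of_nonneg (G_nonneg x z)]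
    exact G_le_two x z

lemma innerX {z : ℝ} (hz0 : 0 ≤ z) (hz4 : z ≤ 4) :
    ∫⁻ x in Icc (0:ℝ) 8, ENNReal.ofReal (G x z)
      = ENNReal.ofReal (if z < 35 / 12 then (77 / 12 : ℝ) else 125 / 12 - z) := by
  rw [← ofReal_integral_eq_lintegral_ofReal (G_intOn z)
    (ae_of_all _ fun x => G_nonneg x z)]
  congr 1
  rw [integral_Icc_eq_integral_Ioc, ← intervalIntegral.integral_of_le (by norm_num : (0:ℝ) ≤ 8)]
  have hII : ∀ a b : ℝ, a ∈ Icc (0:ℝ) 8 → b ∈ Icc (0:ℝ) 8 →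
      IntervalIntegrable (fun x => G x z) volume a b := by
    intro a b ha hb
    refine intervalIntegrable_iff.mpr ((G_intOn z).mono_set ?_)
    intro t ht
    rw [Set.mem_uIoc] at ht
    rcases ht with ⟨h1, h2⟩ | ⟨h1, h2⟩
    · exact ⟨by linarith [ha.1], by linarith [hb.2]⟩
    · exact ⟨by linarith [hb.1], by linarith [ha.2]⟩
  by_cases hzc : z < 35 / 12
  · rw [if_pos hzc]
    have hG : ∀ x, G x z = phi (max (x - z) 0) :=
      fun x => if_pos (lt_of_le_of_lt (min_le_right x z) hzc)
    have hm : ∀ a b : ℝ, a ∈ Icc (0:ℝ) 8 → b ∈ Icc (0:ℝ) 8 → True := fun _ _ _ _ => trivial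
    have hz8 : z ∈ Icc (0:ℝ) 8 := ⟨hz0, by linarith⟩
    have hz18 : z + 1 ∈ Icc (0:ℝ) 8 := ⟨by linarith, by linarith⟩
    have hz48 : z + 4 ∈ Icc (0:ℝ) 8 := ⟨by linarith, by linarith⟩
    have h08 : (0:ℝ) ∈ Icc (0:ℝ) 8 := by norm_num
    have h88 : (8:ℝ) ∈ Icc (0:ℝ) 8 := by norm_num
    rw [← integral_add_adjacent_intervals (hII 0 z h08 hz8) (hII z 8 hz8 h88),
        ← integral_add_adjacent_intervals (hII z (z+1) hz8 hz18) (hII (z+1) 8 hz18 h88),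
        ← integral_add_adjacent_intervals (hII (z+1) (z+4) hz18 hz48) (hII (z+4) 8 hz48 h88)]
    have I1 : ∫ x in (0:ℝ)..z, G x z = z := by
      rw [integral_congr (g := fun _ => (1:ℝ)) ?_, intervalIntegral.integral_const]
      · norm_num
      · intro x hx
        rw [uIcc_of_le hz0] at hx
        show G x z = 1
        rw [hG x, max_eq_right (by linarith [hx.2] : x - z ≤ 0), phi_zero]
    have I2 : ∫ x in z..(z+1), G x z = 13 / 24 := by
      rw [integral_congr (g := fun x => ((1-(x-z))*(4-(x-z)) + (x-z)*(x-z))/4) ?_]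
      · rw [intervalIntegral.integral_comp_sub_right
          (fun u => ((1-u)*(4-u) + u*u)/4) z, show z - z = (0:ℝ) by ring,
          show z + 1 - z = (1:ℝ) by ring]
        rw [integral_congr (g := fun u => 1 + (-5/4) * u + (1/2) * u ^ 2)
          (fun u _ => by ring)]
        rw [integral_poly2]
        norm_num
      · intro x hx
        rw [uIcc_of_le (by linarith : z ≤ z + 1)] at hx
        obtain ⟨h1, h2⟩ := hx
        show G x z = ((1-(x-z))*(4-(x-z)) + (x-z)*(x-z))/4
        rw [hG x]
        unfold phi
        rw [max_eq_left (by linarith : (0:ℝ) ≤ x - z),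
            max_eq_left (by linarith : (0:ℝ) ≤ 1 - (x - z)),
            min_eq_left (by linarith : x - z ≤ 1),
            min_eq_right (by linarith : x - z ≤ 4)]
    have I3 : ∫ x in (z+1)..(z+4), G x z = 15 / 8 := by
      rw [integral_congr (g := fun x => (x - z)/4) ?_]
      · rw [intervalIntegral.integral_comp_sub_right (fun u => u/4) z,
          show z + 1 - z = (1:ℝ) by ring, show z + 4 - z = (4:ℝ) by ring]
        rw [integral_congr (g := fun u => 0 + (1/4) * u + 0 * u ^ 2)
          (fun u _ => by ring)]
        rw [integral_poly2]
        norm_num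
      · intro x hx
        rw [uIcc_of_le (by linarith : z + 1 ≤ z + 4)] at hx
        obtain ⟨h1, h2⟩ := hx
        show G x z = (x - z)/4
        rw [hG x]
        unfold phi
        rw [max_eq_left (by linarith : (0:ℝ) ≤ x - z),
            max_eq_right (by linarith : 1 - (x - z) ≤ 0),
            min_eq_right (by linarith : (1:ℝ) ≤ x - z),
            min_eq_right (by linarith : x - z ≤ 4)]
        ring
    have I4 : ∫ x in (z+4)..8, G x z = 4 - z := by
      rw [integral_congr (g := fun _ => (1:ℝ)) ?_, intervalIntegral.integral_const]
      · norm_num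
        ring
      · intro x hx
        rw [uIcc_of_le (by linarith : z + 4 ≤ 8)] at hx
        obtain ⟨h1, h2⟩ := hx
        show G x z = 1
        rw [hG x]
        unfold phi
        rw [max_eq_left (by linarith : (0:ℝ) ≤ x - z),
            max_eq_right (by linarith : 1 - (x - z) ≤ 0),
            min_eq_right (by linarith : (1:ℝ) ≤ x - z),
            min_eq_left (by linarith : (4:ℝ) ≤ x - z)]
        ring
    rw [I1, I2, I3, I4]
    ring
  · rw [if_neg hzc]
    push_neg at hzc
    have hc8 : (35/12 : ℝ) ∈ Icc (0:ℝ) 8 := by norm_num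
    have hz8 : z ∈ Icc (0:ℝ) 8 := ⟨hz0, by linarith⟩
    have hz18 : z + 1 ∈ Icc (0:ℝ) 8 := ⟨by linarith, by linarith⟩
    have h08 : (0:ℝ) ∈ Icc (0:ℝ) 8 := by norm_num
    have h88 : (8:ℝ) ∈ Icc (0:ℝ) 8 := by norm_num
    rw [← integral_add_adjacent_intervals (hII 0 (35/12) h08 hc8) (hII (35/12) 8 hc8 h88),
        ← integral_add_adjacent_intervals (hII (35/12) z hc8 hz8) (hII z 8 hz8 h88),
        ← integral_add_adjacent_intervals (hII z (z+1) hz8 hz18) (hII (z+1) 8 hz18 h88)]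
    have hne : ∀ᵐ x : ℝ ∂volume, x ≠ (35/12 : ℝ) := by
      rw [ae_iff]
      simp only [not_not, setOf_eq_eq_singleton]
      exact measure_singleton _
    have I1 : ∫ x in (0:ℝ)..(35/12), G x z = 35 / 12 := by
      rw [intervalIntegral.integral_congr_ae (g := fun _ => (1:ℝ)) ?_, intervalIntegral.integral_const]
      · norm_num
      · filter_upwards [hne] with x hx hmem
        rw [Set.uIoc_of_le (by norm_num : (0:ℝ) ≤ 35/12), mem_Ioc] at hmem
        have hxc : x < 35/12 := lt_of_le_of_ne hmem.2 hx
        have hxz : x ≤ z := by linarith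
        show G x z = 1
        unfold G
        rw [min_eq_left hxz, if_pos hxc, max_eq_right (by linarith : x - z ≤ 0), phi_zero]
    have I2 : ∫ x in (35/12:ℝ)..z, G x z = 0 := by
      rw [integral_congr (g := fun _ => (0:ℝ)) ?_, intervalIntegral.integral_const]
      · norm_num
      · intro x hx
        rw [uIcc_of_le hzc] at hx
        obtain ⟨h1, h2⟩ := hx
        show G x z = 0
        unfold G
        rw [min_eq_left h2, if_neg (not_lt.mpr h1),
            max_eq_right (by linarith : x - z ≤ 0)]
        unfold psi
        rw [min_eq_left (by norm_num : (0:ℝ) ≤ 1)]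
    have I3 : ∫ x in z..(z+1), G x z = 1 / 2 := by
      rw [integral_congr (g := fun x => x - z) ?_]
      · rw [intervalIntegral.integral_comp_sub_right (fun u => u) z,
          show z - z = (0:ℝ) by ring, show z + 1 - z = (1:ℝ) by ring]
        rw [integral_congr (g := fun u => 0 + 1 * u + 0 * u ^ 2) (fun u _ => by ring)]
        rw [integral_poly2]
        norm_num
      · intro x hx
        rw [uIcc_of_le (by linarith : z ≤ z + 1)] at hx
        obtain ⟨h1, h2⟩ := hx
        show G x z = x - z
        unfold G
        rw [min_eq_right h1, if_neg (not_lt.mpr hzc),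
            max_eq_left (by linarith : (0:ℝ) ≤ x - z)]
        unfold psi
        rw [min_eq_left (by linarith : x - z ≤ 1)]
    have I4 : ∫ x in (z+1)..8, G x z = 7 - z := by
      rw [integral_congr (g := fun _ => (1:ℝ)) ?_, intervalIntegral.integral_const]
      · norm_num
        ring
      · intro x hx
        rw [uIcc_of_le (by linarith : z + 1 ≤ 8)] at hx
        obtain ⟨h1, h2⟩ := hx
        show G x z = 1
        unfold G
        rw [min_eq_right (by linarith : z ≤ x), if_neg (not_lt.mpr hzc),
            max_eq_left (by linarith : (0:ℝ) ≤ x - z)]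
        unfold psi
        rw [min_eq_right (by linarith : (1:ℝ) ≤ x - z)]
    rw [I1, I2, I3, I4]
    ring

/-! ### The outer integral over `z` -/

noncomputable def Afun (z : ℝ) : ℝ := if z < 35 / 12 then (77 / 12 : ℝ) else 125 / 12 - z

lemma Afun_meas : Measurable Afun := by
  unfold Afun
  exact Measurable.ite (measurableSet_lt measurable_id measurable_const)
    measurable_const (by fun_prop)

lemma outerZ : ∫⁻ z in Icc (0:ℝ) 4, ENNReal.ofReal (Afun z)
    = ENNReal.ofReal (7561 / 288) := by
  have hint : IntegrableOn Afun (Icc (0:ℝ) 4) volume := by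
    apply Measure.integrableOn_of_bounded measure_Icc_lt_top.ne
      Afun_meas.aestronglyMeasurable (M := 11)
    refine (ae_restrict_iff' measurableSet_Icc).mpr (ae_of_all _ fun z hz => ?_)
    rw [Real.norm_eq_abs, abs_le]
    unfold Afun
    split_ifs
    · constructor <;> norm_num
    · constructor <;> [linarith [hz.2]; linarith [hz.1]]
  have hnn : 0 ≤ᶠ[ae (volume.restrict (Icc (0:ℝ) 4))] Afun := by
    refine (ae_restrict_iff' measurableSet_Icc).mpr (ae_of_all _ fun z hz => ?_)
    show (0:ℝ) ≤ Afun z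
    unfold Afun
    split_ifs
    · norm_num
    · linarith [hz.2]
  rw [← ofReal_integral_eq_lintegral_ofReal hint hnn]
  congr 1
  rw [integral_Icc_eq_integral_Ioc, ← intervalIntegral.integral_of_le (by norm_num : (0:ℝ) ≤ 4)]
  have hII : ∀ a b : ℝ, a ∈ Icc (0:ℝ) 4 → b ∈ Icc (0:ℝ) 4 →
      IntervalIntegrable Afun volume a b := by
    intro a b ha hb
    refine intervalIntegrable_iff.mpr (hint.mono_set ?_)
    intro t ht
    rw [Set.mem_uIoc] at ht
    rcases ht with ⟨h1, h2⟩ | ⟨h1, h2⟩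
    · exact ⟨by linarith [ha.1], by linarith [hb.2]⟩
    · exact ⟨by linarith [hb.1], by linarith [ha.2]⟩
  rw [← integral_add_adjacent_intervals (a := 0) (b := 35/12) (c := 4)
    (hII 0 (35/12) (by norm_num) (by norm_num)) (hII (35/12) 4 (by norm_num) (by norm_num))]
  have hne : ∀ᵐ z : ℝ ∂volume, z ≠ (35/12 : ℝ) := by
    rw [ae_iff]
    simp only [not_not, setOf_eq_eq_singleton]
    exact measure_singleton _
  have J1 : ∫ z in (0:ℝ)..(35/12), Afun z = 35 / 12 * (77 / 12) := by
    rw [intervalIntegral.integral_congr_ae (g := fun _ => (77/12 : ℝ)) ?_,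
      intervalIntegral.integral_const]
    · norm_num
    · filter_upwards [hne] with z hz hmem
      rw [Set.uIoc_of_le (by norm_num : (0:ℝ) ≤ 35/12), mem_Ioc] at hmem
      have : z < 35/12 := lt_of_le_of_ne hmem.2 hz
      show Afun z = 77/12
      rw [Afun, if_pos this]
  have J2 : ∫ z in (35/12:ℝ)..4, Afun z = 2171 / 288 := by
    rw [integral_congr (g := fun z => 125/12 + (-1) * z + 0 * z ^ 2) ?_]
    · rw [integral_poly2]
      norm_num
    · intro z hz
      rw [uIcc_of_le (by norm_num : (35/12:ℝ) ≤ 4)] at hz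
      show Afun z = 125/12 + (-1) * z + 0 * z ^ 2
      rw [Afun, if_neg (not_lt.mpr hz.1)]
      ring
  rw [J1, J2]
  norm_num

/-! ### Section lemmas -/

lemma sec2 (x z : ℝ) :
    ((unif 0 4).prod (unif 0 1))
      {w : ℝ × ℝ | (max (x - z) 0 < w.1 ∧ min x z < 35 / 12 ∧ max (x - z) 0 < w.2) ∨
        (¬(max (x - z) 0 < w.1 ∧ min x z < 35 / 12) ∧ w.2 < max (x - z) 0)}
      = ENNReal.ofReal (G x z) := by
  have hr0 : 0 ≤ max (x - z) 0 := le_max_right _ _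
  have h1 : MeasurableSet {w : ℝ × ℝ | max (x - z) 0 < w.1} :=
    measurableSet_lt measurable_const measurable_fst
  have h2 : MeasurableSet {w : ℝ × ℝ | min x z < 35 / 12} := MeasurableSet.const _
  have h3 : MeasurableSet {w : ℝ × ℝ | max (x - z) 0 < w.2} :=
    measurableSet_lt measurable_const measurable_snd
  have h4 : MeasurableSet {w : ℝ × ℝ | w.2 < max (x - z) 0} :=
    measurableSet_lt measurable_snd measurable_const
  have hS : MeasurableSet
      {w : ℝ × ℝ | (max (x - z) 0 < w.1 ∧ min x z < 35 / 12 ∧ max (x - z) 0 < w.2) ∨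
        (¬(max (x - z) 0 < w.1 ∧ min x z < 35 / 12) ∧ w.2 < max (x - z) 0)} :=
    (h1.inter (h2.inter h3)).union (((h1.inter h2).compl).inter h4)
  rw [Measure.prod_apply hS]
  have hsec : ∀ t : ℝ,
      unif 0 1 (Prod.mk t ⁻¹'
        {w : ℝ × ℝ | (max (x - z) 0 < w.1 ∧ min x z < 35 / 12 ∧ max (x - z) 0 < w.2) ∨
          (¬(max (x - z) 0 < w.1 ∧ min x z < 35 / 12) ∧ w.2 < max (x - z) 0)})
      = if max (x - z) 0 < t ∧ min x z < 35 / 12 then ENNReal.ofReal (1 - max (x - z) 0)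
        else ENNReal.ofReal (min (max (x - z) 0) 1) := by
    intro t
    have hpre : Prod.mk t ⁻¹'
        {w : ℝ × ℝ | (max (x - z) 0 < w.1 ∧ min x z < 35 / 12 ∧ max (x - z) 0 < w.2) ∨
          (¬(max (x - z) 0 < w.1 ∧ min x z < 35 / 12) ∧ w.2 < max (x - z) 0)}
        = {y : ℝ | ((max (x - z) 0 < t ∧ min x z < 35 / 12) ∧ max (x - z) 0 < y) ∨
            (¬(max (x - z) 0 < t ∧ min x z < 35 / 12) ∧ y < max (x - z) 0)} := by
      ext y
      simp only [Set.mem_preimage, Set.mem_setOf_eq]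
      tauto
    rw [hpre, yA _ hr0]
  rw [lintegral_congr hsec, zstep _ hr0]
  rfl

lemma sec1 (x : ℝ) :
    ((unif 0 4).prod ((unif 0 4).prod (unif 0 1)))
      {q : ℝ × ℝ × ℝ | (max (x - q.1) 0 < q.2.1 ∧ min x q.1 < 35 / 12 ∧
          max (x - q.1) 0 < q.2.2) ∨
        (¬(max (x - q.1) 0 < q.2.1 ∧ min x q.1 < 35 / 12) ∧ q.2.2 < max (x - q.1) 0)}
      = (ENNReal.ofReal 4)⁻¹ * ∫⁻ z in Icc (0:ℝ) 4, ENNReal.ofReal (G x z) := by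
  have h1 : MeasurableSet {q : ℝ × ℝ × ℝ | max (x - q.1) 0 < q.2.1} :=
    measurableSet_lt (by fun_prop) (by fun_prop)
  have h2 : MeasurableSet {q : ℝ × ℝ × ℝ | min x q.1 < 35 / 12} :=
    measurableSet_lt (by fun_prop) measurable_const
  have h3 : MeasurableSet {q : ℝ × ℝ × ℝ | max (x - q.1) 0 < q.2.2} :=
    measurableSet_lt (by fun_prop) (by fun_prop)
  have h4 : MeasurableSet {q : ℝ × ℝ × ℝ | q.2.2 < max (x - q.1) 0} :=
    measurableSet_lt (by fun_prop) (by fun_prop)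
  have hS : MeasurableSet
      {q : ℝ × ℝ × ℝ | (max (x - q.1) 0 < q.2.1 ∧ min x q.1 < 35 / 12 ∧
          max (x - q.1) 0 < q.2.2) ∨
        (¬(max (x - q.1) 0 < q.2.1 ∧ min x q.1 < 35 / 12) ∧ q.2.2 < max (x - q.1) 0)} :=
    (h1.inter (h2.inter h3)).union (((h1.inter h2).compl).inter h4)
  rw [Measure.prod_apply hS]
  have hsec : ∀ z : ℝ, ((unif 0 4).prod (unif 0 1)) (Prod.mk z ⁻¹'
      {q : ℝ × ℝ × ℝ | (max (x - q.1) 0 < q.2.1 ∧ min x q.1 < 35 / 12 ∧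
          max (x - q.1) 0 < q.2.2) ∨
        (¬(max (x - q.1) 0 < q.2.1 ∧ min x q.1 < 35 / 12) ∧ q.2.2 < max (x - q.1) 0)})
      = ENNReal.ofReal (G x z) := fun z => sec2 x z
  rw [lintegral_congr hsec]
  rw [lintegral_unif]
  norm_num

end Stmt3Aux

open Stmt3Aux

/-- Let `X ~ Uni(0,8)`, `Z ~ Uni(0,4)`, `Z' ~ Uni(0,4)`, `Y ~ Uni(0,1)` be independent
(modelled by the product measure, with `p = (x, z, z', y)`), and set `R := max (X - Z) 0`
and `T := min X Z`.  Then
`P((R < Z' ∧ T < 35/12 ∧ R < Y) ∨ (¬(R < Z' ∧ T < 35/12) ∧ Y < R)) = 7561/9216`.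
In particular, `7561/9216 > 77/96`. -/
theorem stmt_3 :
    ((unif 0 8).prod ((unif 0 4).prod ((unif 0 4).prod (unif 0 1))))
        {p : ℝ × ℝ × ℝ × ℝ |
          (max (p.1 - p.2.1) 0 < p.2.2.1 ∧ min p.1 p.2.1 < 35/12 ∧
            max (p.1 - p.2.1) 0 < p.2.2.2) ∨
          (¬ (max (p.1 - p.2.1) 0 < p.2.2.1 ∧ min p.1 p.2.1 < 35/12) ∧
            p.2.2.2 < max (p.1 - p.2.1) 0)} = 7561/9216 ∧
    (7561/9216 : ℝ) > 77/96 := by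
  refine ⟨?_, by norm_num⟩
  have h1 : MeasurableSet {p : ℝ × ℝ × ℝ × ℝ | max (p.1 - p.2.1) 0 < p.2.2.1} :=
    measurableSet_lt (by fun_prop) (by fun_prop)
  have h2 : MeasurableSet {p : ℝ × ℝ × ℝ × ℝ | min p.1 p.2.1 < 35/12} :=
    measurableSet_lt (by fun_prop) measurable_const
  have h3 : MeasurableSet {p : ℝ × ℝ × ℝ × ℝ | max (p.1 - p.2.1) 0 < p.2.2.2} :=
    measurableSet_lt (by fun_prop) (by fun_prop)
  have h4 : MeasurableSet {p : ℝ × ℝ × ℝ × ℝ | p.2.2.2 < max (p.1 - p.2.1) 0} :=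
    measurableSet_lt (by fun_prop) (by fun_prop)
  have hS : MeasurableSet {p : ℝ × ℝ × ℝ × ℝ |
      (max (p.1 - p.2.1) 0 < p.2.2.1 ∧ min p.1 p.2.1 < 35/12 ∧
        max (p.1 - p.2.1) 0 < p.2.2.2) ∨
      (¬ (max (p.1 - p.2.1) 0 < p.2.2.1 ∧ min p.1 p.2.1 < 35/12) ∧
        p.2.2.2 < max (p.1 - p.2.1) 0)} :=
    (h1.inter (h2.inter h3)).union (((h1.inter h2).compl).inter h4)
  rw [Measure.prod_apply hS]
  have hsec : ∀ x : ℝ, ((unif 0 4).prod ((unif 0 4).prod (unif 0 1))) (Prod.mk x ⁻¹'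
      {p : ℝ × ℝ × ℝ × ℝ |
        (max (p.1 - p.2.1) 0 < p.2.2.1 ∧ min p.1 p.2.1 < 35/12 ∧
          max (p.1 - p.2.1) 0 < p.2.2.2) ∨
        (¬ (max (p.1 - p.2.1) 0 < p.2.2.1 ∧ min p.1 p.2.1 < 35/12) ∧
          p.2.2.2 < max (p.1 - p.2.1) 0)})
      = (ENNReal.ofReal 4)⁻¹ * ∫⁻ z in Icc (0:ℝ) 4, ENNReal.ofReal (G x z) :=
    fun x => sec1 x
  rw [lintegral_congr hsec, lintegral_unif,
    lintegral_const_mul' _ _ (ENNReal.inv_ne_top.mpr (by norm_num [ENNReal.ofReal_eq_zero]))]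
  have hswap : ∫⁻ x in Icc (0:ℝ) 8, ∫⁻ z in Icc (0:ℝ) 4, ENNReal.ofReal (G x z)
      = ∫⁻ z in Icc (0:ℝ) 4, ∫⁻ x in Icc (0:ℝ) 8, ENNReal.ofReal (G x z) := by
    apply lintegral_lintegral_swap
    have hm : Measurable fun p : ℝ × ℝ => ENNReal.ofReal (G p.1 p.2) := by
      apply ENNReal.measurable_ofReal.comp
      unfold G
      exact Measurable.ite (measurableSet_lt (by fun_prop) measurable_const)
        (phi_cont.comp (by fun_prop : Continuous fun p : ℝ × ℝ => max (p.1 - p.2) 0)).measurable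
        (psi_cont.comp (by fun_prop : Continuous fun p : ℝ × ℝ => max (p.1 - p.2) 0)).measurable
    exact hm.aemeasurable
  rw [hswap]
  rw [setLIntegral_congr_fun measurableSet_Icc
    (fun z hz => (show _ = ENNReal.ofReal (Afun z) from innerX hz.1 hz.2))]
  rw [outerZ]
  rw [show (8:ℝ) - 0 = 8 from by norm_num, ← ENNReal.div_eq_inv_mul, ← ENNReal.div_eq_inv_mul,
    ← ENNReal.ofReal_div_of_pos (by norm_num : (0:ℝ) < 4),
    ← ENNReal.ofReal_div_of_pos (by norm_num : (0:ℝ) < 8),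
    show (7561:ℝ)/288/4/8 = 7561/9216 from by norm_num]
  rw [ENNReal.ofReal_div_of_pos (by norm_num)]
  norm_num
end

section
/- Let X ~ Uni(0,2), Z ~ Uni(0,2), and Y ~ Uni(0,1) be independent random variables. For every Lebesgue-measurable set A ⊆ [0,2], P( (Z ∈ A and max(X − Z, 0) < Y) or (Z ∉ A and Y < max(X − Z, 0)) ) ≤ 37/48. -/
open MeasureTheory Set

open intervalIntegral
open scoped ENNReal

lemma smul_prod' {α β : Type*} [MeasurableSpace α] [MeasurableSpace β]
    (c : ℝ≥0∞) (μ : Measure α) (ν : Measure β) [SFinite μ] [SFinite ν] :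
    (c • μ).prod ν = c • (μ.prod ν) := by
  ext s hs
  rw [Measure.prod_apply hs, Measure.smul_apply, Measure.prod_apply hs,
    lintegral_smul_measure, smul_eq_mul]

lemma prod_smul' {α β : Type*} [MeasurableSpace α] [MeasurableSpace β]
    (c : ℝ≥0∞) (hc : c ≠ ⊤) (μ : Measure α) (ν : Measure β) [SFinite μ] [SFinite ν] :
    μ.prod (c • ν) = c • (μ.prod ν) := by
  ext s hs
  rw [Measure.prod_apply hs, Measure.smul_apply, Measure.prod_apply hs, smul_eq_mul,
    ← lintegral_const_mul' _ _ hc]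
  simp

noncomputable def cfun (z : ℝ) : ℝ := if z ≤ 1 then 3/2 - z else (2 - z)^2/2

lemma cfun_cont : Continuous cfun := by
  unfold cfun
  apply Continuous.if_le (by fun_prop) (by fun_prop) continuous_id continuous_const
  intro z hz; simp only [id] at hz; rw [hz]; norm_num

lemma minmax_cont (z : ℝ) : Continuous fun x : ℝ => min (max (x - z) 0) 1 := by fun_prop

lemma integral_c (z : ℝ) (hz : z ∈ Icc (0:ℝ) 2) :
    ∫ x in (0:ℝ)..2, min (max (x - z) 0) 1 = cfun z := by
  obtain ⟨hz0, hz2⟩ := hz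
  have hii : ∀ a b : ℝ, IntervalIntegrable (fun x => min (max (x - z) 0) 1) volume a b :=
    fun a b => (minmax_cont z).intervalIntegrable a b
  have hzero : ∫ x in (0:ℝ)..z, min (max (x - z) 0) 1 = 0 := by
    rw [intervalIntegral.integral_congr (g := fun _ => (0:ℝ)) ?_,
      intervalIntegral.integral_const, smul_zero]
    intro x hx
    rw [uIcc_of_le hz0] at hx
    simp only
    rw [max_eq_right (by linarith [hx.2]), min_eq_left (by norm_num)]
  have hlin : ∀ b : ℝ, z ≤ b → b ≤ z + 1 →
      ∫ x in z..b, min (max (x - z) 0) 1 = (b - z)^2/2 := by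
    intro b hb hb1
    have : ∫ x in z..b, min (max (x - z) 0) 1 = ∫ x in z..b, (x - z) := by
      apply intervalIntegral.integral_congr
      intro x hx
      rw [uIcc_of_le hb] at hx
      simp only
      rw [max_eq_left (by linarith [hx.1]), min_eq_left (by linarith [hx.2])]
    rw [this, intervalIntegral.integral_comp_sub_right (fun x => x) z, integral_id]
    ring_nf
  rcases le_or_gt z 1 with h1 | h1
  · have split1 : ∫ x in (0:ℝ)..2, min (max (x - z) 0) 1 =
        (∫ x in (0:ℝ)..z, min (max (x - z) 0) 1) + (∫ x in z..(z+1), min (max (x - z) 0) 1)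
          + ∫ x in (z+1)..2, min (max (x - z) 0) 1 := by
      rw [integral_add_adjacent_intervals (hii 0 z) (hii z (z+1)),
        integral_add_adjacent_intervals (hii 0 (z+1)) (hii (z+1) 2)]
    have hone : ∫ x in (z+1)..2, min (max (x - z) 0) 1 = 2 - (z+1) := by
      rw [intervalIntegral.integral_congr (g := fun _ => (1:ℝ)) ?_,
        intervalIntegral.integral_const, smul_eq_mul, mul_one]
      intro x hx
      rw [uIcc_of_le (by linarith)] at hx
      simp only
      rw [max_eq_left (by linarith [hx.1]), min_eq_right (by linarith [hx.1])]
    rw [split1, hzero, hone, hlin (z+1) (by linarith) (by linarith)]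
    unfold cfun
    rw [if_pos h1]; ring_nf
  · have split1 : ∫ x in (0:ℝ)..2, min (max (x - z) 0) 1 =
        (∫ x in (0:ℝ)..z, min (max (x - z) 0) 1) + (∫ x in z..2, min (max (x - z) 0) 1) := by
      rw [integral_add_adjacent_intervals (hii 0 z) (hii z 2)]
    rw [split1, hzero, hlin 2 hz2 (by linarith)]
    unfold cfun
    rw [if_neg (by linarith)]; ring_nf

lemma M_cont : Continuous fun z => max (cfun z) (2 - cfun z) :=
  cfun_cont.max (continuous_const.sub cfun_cont)

lemma integral_M : ∫ z in (0:ℝ)..2, max (cfun z) (2 - cfun z) = 37/12 := by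
  have hii : ∀ a b : ℝ, IntervalIntegrable (fun z => max (cfun z) (2 - cfun z)) volume a b :=
    fun a b => M_cont.intervalIntegrable a b
  have split1 : ∫ z in (0:ℝ)..2, max (cfun z) (2 - cfun z) =
      (∫ z in (0:ℝ)..(1/2), max (cfun z) (2 - cfun z))
        + (∫ z in (1/2:ℝ)..1, max (cfun z) (2 - cfun z))
        + ∫ z in (1:ℝ)..2, max (cfun z) (2 - cfun z) := by
    rw [integral_add_adjacent_intervals (hii 0 (1/2)) (hii (1/2) 1),
      integral_add_adjacent_intervals (hii 0 1) (hii 1 2)]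
  have p1 : ∫ z in (0:ℝ)..(1/2), max (cfun z) (2 - cfun z) = 5/8 := by
    have : ∫ z in (0:ℝ)..(1/2), max (cfun z) (2 - cfun z)
        = ∫ z in (0:ℝ)..(1/2), (3/2 - z) := by
      apply intervalIntegral.integral_congr
      intro z hz
      rw [uIcc_of_le (by norm_num)] at hz
      simp only
      unfold cfun
      rw [if_pos (by linarith [hz.2]), max_eq_left (by linarith [hz.2])]
    rw [this, integral_sub (intervalIntegrable_const) intervalIntegral.intervalIntegrable_id,
      intervalIntegral.integral_const, integral_id]
    norm_num
  have p2 : ∫ z in (1/2:ℝ)..1, max (cfun z) (2 - cfun z) = 5/8 := by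
    have : ∫ z in (1/2:ℝ)..1, max (cfun z) (2 - cfun z)
        = ∫ z in (1/2:ℝ)..1, (1/2 + z) := by
      apply intervalIntegral.integral_congr
      intro z hz
      rw [uIcc_of_le (by norm_num)] at hz
      simp only
      unfold cfun
      rw [if_pos hz.2, max_eq_right (by linarith [hz.1])]
      ring
    rw [this, integral_add (intervalIntegrable_const) intervalIntegral.intervalIntegrable_id,
      intervalIntegral.integral_const, integral_id]
    norm_num
  have p3 : ∫ z in (1:ℝ)..2, max (cfun z) (2 - cfun z) = 11/6 := by
    have : ∫ z in (1:ℝ)..2, max (cfun z) (2 - cfun z)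
        = ∫ z in (1:ℝ)..2, (2 - (2 - z)^2/2) := by
      apply intervalIntegral.integral_congr
      intro z hz
      rw [uIcc_of_le (by norm_num)] at hz
      simp only
      have hc : cfun z = (2 - z)^2/2 := by
        unfold cfun
        rcases le_or_gt z 1 with h | h
        · rw [if_pos h, le_antisymm h hz.1]; norm_num
        · rw [if_neg (not_le.2 h)]
      rw [hc, max_eq_right]
      nlinarith [hz.1, hz.2]
    rw [this, integral_sub (intervalIntegrable_const)
      ((by fun_prop : Continuous fun z : ℝ => (2 - z)^2/2).intervalIntegrable _ _),
      intervalIntegral.integral_const, intervalIntegral.integral_div,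
      intervalIntegral.integral_comp_sub_left (fun x => x^2) 2]
    norm_num [integral_pow]
  rw [split1, p1, p2, p3]; norm_num

open scoped Classical in
noncomputable def G (A : Set ℝ) (q : ℝ × ℝ) : ℝ≥0∞ :=
  if q.1 ∈ Icc (0:ℝ) 2 ∧ q.2 ∈ Icc (0:ℝ) 2 then
    (if q.2 ∈ A then ENNReal.ofReal (1 - min (max (q.1 - q.2) 0) 1)
     else ENNReal.ofReal (min (max (q.1 - q.2) 0) 1))
  else 0

lemma G_meas (A : Set ℝ) (hA : MeasurableSet A) : Measurable (G A) := by
  unfold G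
  have hm : Measurable fun q : ℝ × ℝ => min (max (q.1 - q.2) 0) 1 :=
    ((measurable_fst.sub measurable_snd).max measurable_const).min measurable_const
  exact Measurable.ite
    ((measurable_fst measurableSet_Icc).inter (measurable_snd measurableSet_Icc))
    (Measurable.ite (measurable_snd hA)
      (ENNReal.measurable_ofReal.comp (measurable_const.sub hm))
      (ENNReal.measurable_ofReal.comp hm)) measurable_const

lemma slice_eq_s6 (A : Set ℝ) (x z : ℝ) :
    (volume : Measure ℝ) {y : ℝ | ((x, z, y) : ℝ × ℝ × ℝ) ∈
      ({p : ℝ × ℝ × ℝ |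
          (p.2.1 ∈ A ∧ max (p.1 - p.2.1) 0 < p.2.2) ∨
          (p.2.1 ∉ A ∧ p.2.2 < max (p.1 - p.2.1) 0)} ∩
        (Icc 0 2) ×ˢ ((Icc 0 2) ×ˢ (Icc 0 1)))} = G A (x, z) := by
  set m := max (x - z) 0 with hm
  have hm0 : 0 ≤ m := le_max_right _ _
  unfold G
  by_cases hxz : x ∈ Icc (0:ℝ) 2 ∧ z ∈ Icc (0:ℝ) 2
  · rw [if_pos hxz]
    obtain ⟨hx, hz⟩ := hxz
    by_cases hzA : z ∈ A
    · rw [if_pos hzA]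
      have hset : {y : ℝ | ((x, z, y) : ℝ × ℝ × ℝ) ∈
          ({p : ℝ × ℝ × ℝ |
            (p.2.1 ∈ A ∧ max (p.1 - p.2.1) 0 < p.2.2) ∨
            (p.2.1 ∉ A ∧ p.2.2 < max (p.1 - p.2.1) 0)} ∩
          (Icc 0 2) ×ˢ ((Icc 0 2) ×ˢ (Icc 0 1)))} = Ioc m 1 := by
        ext y
        simp only [mem_setOf_eq, mem_inter_iff, mem_prod, mem_Ioc, hzA, not_true_eq_false,
          false_and, or_false, true_and, mem_Icc]
        constructor
        · rintro ⟨h1, -, -, -, h2⟩; exact ⟨h1, h2⟩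
        · rintro ⟨h1, h2⟩
          exact ⟨h1, ⟨hx.1, hx.2⟩, ⟨hz.1, hz.2⟩, le_of_lt (lt_of_le_of_lt hm0 h1), h2⟩
      rw [hset, Real.volume_Ioc]
      rcases le_or_gt m 1 with h | h
      · rw [min_eq_left h]
      · rw [min_eq_right h.le]
        rw [ENNReal.ofReal_eq_zero.2 (by linarith)]
        simp
    · rw [if_neg hzA]
      rcases le_or_gt m 1 with h | h
      · have hset : {y : ℝ | ((x, z, y) : ℝ × ℝ × ℝ) ∈
            ({p : ℝ × ℝ × ℝ |
              (p.2.1 ∈ A ∧ max (p.1 - p.2.1) 0 < p.2.2) ∨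
              (p.2.1 ∉ A ∧ p.2.2 < max (p.1 - p.2.1) 0)} ∩
            (Icc 0 2) ×ˢ ((Icc 0 2) ×ˢ (Icc 0 1)))} = Ico 0 m := by
          ext y
          simp only [mem_setOf_eq, mem_inter_iff, mem_prod, mem_Ico, hzA, not_false_iff,
            true_and, false_and, false_or, mem_Icc]
          constructor
          · rintro ⟨h1, -, -, h2, -⟩; exact ⟨h2, h1⟩
          · rintro ⟨h1, h2⟩
            exact ⟨h2, ⟨hx.1, hx.2⟩, ⟨hz.1, hz.2⟩, h1, le_trans h2.le h⟩
        rw [hset, Real.volume_Ico, min_eq_left h, sub_zero]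
      · have hset : {y : ℝ | ((x, z, y) : ℝ × ℝ × ℝ) ∈
            ({p : ℝ × ℝ × ℝ |
              (p.2.1 ∈ A ∧ max (p.1 - p.2.1) 0 < p.2.2) ∨
              (p.2.1 ∉ A ∧ p.2.2 < max (p.1 - p.2.1) 0)} ∩
            (Icc 0 2) ×ˢ ((Icc 0 2) ×ˢ (Icc 0 1)))} = Icc 0 1 := by
          ext y
          simp only [mem_setOf_eq, mem_inter_iff, mem_prod, hzA, not_false_iff, true_and,
            false_and, false_or, mem_Icc]
          constructor
          · rintro ⟨-, -, -, h1, h2⟩; exact ⟨h1, h2⟩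
          · rintro ⟨h1, h2⟩
            exact ⟨lt_of_le_of_lt h2 h, ⟨hx.1, hx.2⟩, ⟨hz.1, hz.2⟩, h1, h2⟩
        rw [hset, Real.volume_Icc, min_eq_right h.le, sub_zero]
  · rw [if_neg hxz]
    have hset : {y : ℝ | ((x, z, y) : ℝ × ℝ × ℝ) ∈
        ({p : ℝ × ℝ × ℝ |
          (p.2.1 ∈ A ∧ max (p.1 - p.2.1) 0 < p.2.2) ∨
          (p.2.1 ∉ A ∧ p.2.2 < max (p.1 - p.2.1) 0)} ∩
        (Icc 0 2) ×ˢ ((Icc 0 2) ×ˢ (Icc 0 1)))} = ∅ := by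
      ext y
      simp only [mem_setOf_eq, mem_inter_iff, mem_prod, mem_empty_iff_false, iff_false]
      rintro ⟨-, h1, h2, -⟩
      exact hxz ⟨h1, h2⟩
    rw [hset, measure_empty]

open scoped Classical in
lemma lint_x (A : Set ℝ) (z : ℝ) :
    ∫⁻ x, G A (x, z) = (Icc (0:ℝ) 2).indicator
      (fun z => if z ∈ A then ENNReal.ofReal (2 - cfun z) else ENNReal.ofReal (cfun z)) z := by
  by_cases hz : z ∈ Icc (0:ℝ) 2
  · rw [indicator_of_mem hz]
    have hfun : (fun x => G A (x, z)) = (Icc (0:ℝ) 2).indicator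
        (fun x => if z ∈ A then ENNReal.ofReal (1 - min (max (x - z) 0) 1)
          else ENNReal.ofReal (min (max (x - z) 0) 1)) := by
      funext x
      unfold G
      by_cases hx : x ∈ Icc (0:ℝ) 2
      · rw [if_pos ⟨hx, hz⟩, indicator_of_mem hx]
      · rw [if_neg (fun h => hx h.1), indicator_of_notMem hx]
    rw [hfun, lintegral_indicator measurableSet_Icc]
    have hIoc : ∀ f : ℝ → ℝ, (∫ x in Icc (0:ℝ) 2, f x) = ∫ x in (0:ℝ)..2, f x := by
      intro f
      rw [integral_Icc_eq_integral_Ioc,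
        ← intervalIntegral.integral_of_le (by norm_num : (0:ℝ) ≤ 2)]
    by_cases hzA : z ∈ A
    · simp only [if_pos hzA]
      have hint : IntegrableOn (fun x => 1 - min (max (x - z) 0) 1) (Icc (0:ℝ) 2) volume :=
        (continuous_const.sub (minmax_cont z)).integrableOn_Icc
      rw [← ofReal_integral_eq_lintegral_ofReal hint (Filter.Eventually.of_forall fun x => by
        simp only [Pi.zero_apply]
        nlinarith [min_le_right (max (x - z) 0) (1:ℝ)])]
      congr 1
      rw [hIoc, integral_sub intervalIntegrable_const ((minmax_cont z).intervalIntegrable _ _),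
        intervalIntegral.integral_const, integral_c z hz]
      norm_num
    · simp only [if_neg hzA]
      have hint : IntegrableOn (fun x => min (max (x - z) 0) 1) (Icc (0:ℝ) 2) volume :=
        (minmax_cont z).integrableOn_Icc
      rw [← ofReal_integral_eq_lintegral_ofReal hint (Filter.Eventually.of_forall fun x => by
        simp only [Pi.zero_apply]
        exact le_min (le_max_right _ _) zero_le_one)]
      congr 1
      rw [hIoc, integral_c z hz]
  · rw [indicator_of_notMem hz]
    have : (fun x => G A (x, z)) = fun _ => (0:ℝ≥0∞) :=
      funext fun x => by unfold G; rw [if_neg (fun h => hz h.2)]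
    rw [this, lintegral_zero]

/-- Let `X ~ Uni(0,2)`, `Z ~ Uni(0,2)`, `Y ~ Uni(0,1)` be independent (modelled by the
product measure, with `p = (x, z, y)`).  For every Lebesgue-measurable set `A ⊆ [0,2]`,
`P((Z ∈ A ∧ max (X - Z) 0 < Y) ∨ (Z ∉ A ∧ Y < max (X - Z) 0)) ≤ 37/48`. -/
theorem stmt_6 (A : Set ℝ) (hA : MeasurableSet A) (hA' : A ⊆ Set.Icc 0 2) :
    ((unif 0 2).prod ((unif 0 2).prod (unif 0 1)))
        {p : ℝ × ℝ × ℝ |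
          (p.2.1 ∈ A ∧ max (p.1 - p.2.1) 0 < p.2.2) ∨
          (p.2.1 ∉ A ∧ p.2.2 < max (p.1 - p.2.1) 0)} ≤ 37/48 := by
  classical
  set S : Set (ℝ × ℝ × ℝ) := {p : ℝ × ℝ × ℝ |
          (p.2.1 ∈ A ∧ max (p.1 - p.2.1) 0 < p.2.2) ∨
          (p.2.1 ∉ A ∧ p.2.2 < max (p.1 - p.2.1) 0)} with hSdef
  have hSm : MeasurableSet S := by
    have h1 : Measurable (fun p : ℝ × ℝ × ℝ => max (p.1 - p.2.1) 0) :=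
      (measurable_fst.sub (measurable_fst.comp measurable_snd)).max measurable_const
    have h2 : Measurable (fun p : ℝ × ℝ × ℝ => p.2.2) := measurable_snd.comp measurable_snd
    have h3 : MeasurableSet {p : ℝ × ℝ × ℝ | p.2.1 ∈ A} :=
      (measurable_fst.comp measurable_snd) hA
    exact (h3.inter (measurableSet_lt h1 h2)).union (h3.compl.inter (measurableSet_lt h2 h1))
  have h1 : unif 0 1 = volume.restrict (Icc 0 1) := by
    unfold unif; rw [Real.volume_Icc]; norm_num
  have h2 : unif 0 2 = (2 : ℝ≥0∞)⁻¹ • volume.restrict (Icc 0 2) := by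
    unfold unif; rw [Real.volume_Icc]; norm_num
  have hbox : ((unif 0 2).prod ((unif 0 2).prod (unif 0 1)))
      = (4 : ℝ≥0∞)⁻¹ • (volume : Measure (ℝ × ℝ × ℝ)).restrict
          ((Icc 0 2) ×ˢ ((Icc 0 2) ×ˢ (Icc 0 1))) := by
    rw [h1, h2, smul_prod', smul_prod', prod_smul' _ (by norm_num), Measure.prod_restrict,
      Measure.prod_restrict, smul_smul, ← Measure.volume_eq_prod, ← Measure.volume_eq_prod,
      ← ENNReal.mul_inv (Or.inl (two_ne_zero)) (Or.inr (by norm_num))]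
    norm_num
  rw [hbox, Measure.smul_apply, Measure.restrict_apply hSm, smul_eq_mul]
  set T : Set (ℝ × ℝ × ℝ) := S ∩ (Icc 0 2) ×ˢ ((Icc 0 2) ×ˢ (Icc 0 1)) with hTdef
  have hT : MeasurableSet T :=
    hSm.inter (measurableSet_Icc.prod (measurableSet_Icc.prod measurableSet_Icc))
  have key : (volume : Measure (ℝ × ℝ × ℝ)) T ≤ ENNReal.ofReal (37/12) := by
    rw [Measure.volume_eq_prod, Measure.prod_apply hT]
    have step1 : ∀ x : ℝ, (volume : Measure (ℝ × ℝ)) (Prod.mk x ⁻¹' T)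
        = ∫⁻ z, G A (x, z) := by
      intro x
      rw [Measure.volume_eq_prod,
        Measure.prod_apply (hT.preimage measurable_prodMk_left)]
      exact lintegral_congr fun z => slice_eq_s6 A x z
    rw [lintegral_congr step1]
    have hGae : AEMeasurable (Function.uncurry fun x z => G A (x, z))
        ((volume : Measure ℝ).prod volume) := by
      rw [← Measure.volume_eq_prod]
      exact (G_meas A hA).aemeasurable
    rw [lintegral_lintegral_swap hGae]
    calc ∫⁻ z, ∫⁻ x, G A (x, z)
        = ∫⁻ z, (Icc (0:ℝ) 2).indicator
            (fun z => if z ∈ A then ENNReal.ofReal (2 - cfun z)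
              else ENNReal.ofReal (cfun z)) z := lintegral_congr (lint_x A)
      _ ≤ ∫⁻ z, (Icc (0:ℝ) 2).indicator
            (fun z => ENNReal.ofReal (max (cfun z) (2 - cfun z))) z := by
          apply lintegral_mono
          intro z
          by_cases hz : z ∈ Icc (0:ℝ) 2
          · rw [indicator_of_mem hz, indicator_of_mem hz]
            by_cases hzA : z ∈ A
            · rw [if_pos hzA]; exact ENNReal.ofReal_le_ofReal (le_max_right _ _)
            · rw [if_neg hzA]; exact ENNReal.ofReal_le_ofReal (le_max_left _ _)
          · rw [indicator_of_notMem hz, indicator_of_notMem hz]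
      _ = ∫⁻ z in Icc (0:ℝ) 2, ENNReal.ofReal (max (cfun z) (2 - cfun z)) :=
          lintegral_indicator measurableSet_Icc _
      _ = ENNReal.ofReal (∫ z in Icc (0:ℝ) 2, max (cfun z) (2 - cfun z)) := by
          rw [← ofReal_integral_eq_lintegral_ofReal M_cont.integrableOn_Icc
            (Filter.Eventually.of_forall fun z => by
              simp only [Pi.zero_apply]
              rcases le_total 0 (cfun z) with h | h
              · exact le_max_of_le_left h
              · exact le_max_of_le_right (by linarith))]
      _ = ENNReal.ofReal (37/12) := by
          rw [integral_Icc_eq_integral_Ioc,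
            ← intervalIntegral.integral_of_le (by norm_num : (0:ℝ) ≤ 2), integral_M]
  calc (4 : ℝ≥0∞)⁻¹ * (volume : Measure (ℝ × ℝ × ℝ)) T
      ≤ (4 : ℝ≥0∞)⁻¹ * ENNReal.ofReal (37/12) := mul_le_mul_right key _
    _ = 37/48 := by
        rw [show ((4:ℝ≥0∞)⁻¹ = ENNReal.ofReal (1/4)) by
            rw [ENNReal.ofReal_div_of_pos (by norm_num)]; simp,
          ← ENNReal.ofReal_mul (by norm_num),
          show (1/4 * (37/12) : ℝ) = 37/48 by norm_num,
          ENNReal.ofReal_div_of_pos (by norm_num)]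
        simp
end

section
/- Let X ~ Uni(0,2), Z ~ Uni(0,2), and Y ~ Uni(0,1) be independent random variables. For every Lebesgue-measurable set B ⊆ [0,2]×[0,1], P( ((X,Y) ∈ B and max(X − Z, 0) < Y) or ((X,Y) ∉ B and Y < max(X − Z, 0)) ) < 1. -/
open MeasureTheory Set

lemma unif_apply (a b : ℝ) (s : Set ℝ) :
    unif a b s = (volume (Set.Icc a b))⁻¹ * volume.restrict (Set.Icc a b) s := rfl

lemma unif_prob {a b : ℝ} (h : a < b) : IsProbabilityMeasure (unif a b) := by
  constructor
  rw [unif_apply, Measure.restrict_apply_univ]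
  refine ENNReal.inv_mul_cancel ?_ ?_
  · simp only [Real.volume_Icc, ne_eq, ENNReal.ofReal_eq_zero, not_le]
    linarith
  · simp [Real.volume_Icc]

lemma unif_pos {a b c d : ℝ} (h1 : a ≤ c) (h2 : c < d) (h3 : d ≤ b) :
    0 < unif a b (Set.Icc c d) := by
  rw [unif_apply, Measure.restrict_apply measurableSet_Icc,
    Set.inter_eq_left.2 (Set.Icc_subset_Icc h1 h3)]
  refine ENNReal.mul_pos ?_ ?_
  · simp [Real.volume_Icc]
  · simp only [Real.volume_Icc, ne_eq, ENNReal.ofReal_eq_zero, not_le]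
    linarith

lemma key_meas (S : Set (ℝ × ℝ)) (hS : MeasurableSet S) (I : Set ℝ) (hI : MeasurableSet I) :
    MeasurableSet {p : ℝ × ℝ × ℝ | (p.1, p.2.2) ∈ S ∧ p.2.1 ∈ I} := by
  refine MeasurableSet.inter ?_ ?_
  · exact (measurable_fst.prodMk measurable_snd.snd) hS
  · exact (measurable_snd.fst) hI

lemma key_s7 (S : Set (ℝ × ℝ)) (hS : MeasurableSet S) (I : Set ℝ) (hI : MeasurableSet I) :
    ((unif 0 2).prod ((unif 0 2).prod (unif 0 1)))
      {p : ℝ × ℝ × ℝ | (p.1, p.2.2) ∈ S ∧ p.2.1 ∈ I}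
    = unif 0 2 I * (unif 0 2).prod (unif 0 1) S := by
  rw [Measure.prod_apply (key_meas S hS I hI)]
  have hsec : ∀ x : ℝ, Prod.mk x ⁻¹' {p : ℝ × ℝ × ℝ | (p.1, p.2.2) ∈ S ∧ p.2.1 ∈ I}
      = I ×ˢ (Prod.mk x ⁻¹' S) := by
    intro x; ext q
    simp only [Set.mem_preimage, Set.mem_setOf_eq, Set.mem_prod]
    tauto
  simp_rw [hsec, Measure.prod_prod]
  rw [lintegral_const_mul _ (measurable_measure_prodMk_left hS),
    ← Measure.prod_apply hS]

/-- Let `X ~ Uni(0,2)`, `Z ~ Uni(0,2)`, `Y ~ Uni(0,1)` be independent (modelled by the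
product measure, with `p = (x, z, y)`).  For every Lebesgue-measurable set
`B ⊆ [0,2] × [0,1]`,
`P(((X,Y) ∈ B ∧ max (X - Z) 0 < Y) ∨ ((X,Y) ∉ B ∧ Y < max (X - Z) 0)) < 1`. -/
theorem stmt_7 (B : Set (ℝ × ℝ)) (hB : MeasurableSet B)
    (hB' : B ⊆ Set.Icc (0:ℝ) 2 ×ˢ Set.Icc (0:ℝ) 1) :
    ((unif 0 2).prod ((unif 0 2).prod (unif 0 1)))
        {p : ℝ × ℝ × ℝ |
          ((p.1, p.2.2) ∈ B ∧ max (p.1 - p.2.1) 0 < p.2.2) ∨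
          ((p.1, p.2.2) ∉ B ∧ p.2.2 < max (p.1 - p.2.1) 0)} < 1 := by
  haveI h02 : IsProbabilityMeasure (unif 0 2) := unif_prob (by norm_num)
  haveI h01 : IsProbabilityMeasure (unif 0 1) := unif_prob (by norm_num)
  set μ := (unif 0 2).prod ((unif 0 2).prod (unif 0 1)) with hμ
  haveI : IsProbabilityMeasure μ := by rw [hμ]; infer_instance
  set R : Set (ℝ × ℝ) := Set.Icc (1:ℝ) (3/2) ×ˢ Set.Icc (1/4:ℝ) (1/2) with hR
  have hRmeas : MeasurableSet R := measurableSet_Icc.prod measurableSet_Icc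
  set S₁ := R ∩ B with hS₁
  set S₂ := R \ B with hS₂
  have hS₁m : MeasurableSet S₁ := hRmeas.inter hB
  have hS₂m : MeasurableSet S₂ := hRmeas.diff hB
  set L₁ : Set (ℝ × ℝ × ℝ) :=
    {p | (p.1, p.2.2) ∈ S₁ ∧ p.2.1 ∈ Set.Icc (0:ℝ) (1/2)} with hL₁
  set L₂ : Set (ℝ × ℝ × ℝ) :=
    {p | (p.1, p.2.2) ∈ S₂ ∧ p.2.1 ∈ Set.Icc (3/2:ℝ) 2} with hL₂
  have hL₁m : MeasurableSet L₁ := key_meas _ hS₁m _ measurableSet_Icc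
  have hL₂m : MeasurableSet L₂ := key_meas _ hS₂m _ measurableSet_Icc
  have hdisj : Disjoint L₁ L₂ := by
    rw [Set.disjoint_left]
    rintro p ⟨_, hz1⟩ ⟨_, hz2⟩
    rw [Set.mem_Icc] at hz1 hz2
    linarith [hz1.2, hz2.1]
  -- the event avoids L₁ ∪ L₂
  have hE_sub : {p : ℝ × ℝ × ℝ |
      ((p.1, p.2.2) ∈ B ∧ max (p.1 - p.2.1) 0 < p.2.2) ∨
      ((p.1, p.2.2) ∉ B ∧ p.2.2 < max (p.1 - p.2.1) 0)} ⊆ (L₁ ∪ L₂)ᶜ := by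
    rintro ⟨x, z, y⟩ hp hL
    simp only [Set.mem_setOf_eq] at hp
    rcases hL with hL | hL
    · obtain ⟨⟨hxyR, hxyB⟩, hz⟩ := hL
      rw [hR, Set.mem_prod, Set.mem_Icc, Set.mem_Icc] at hxyR
      rw [Set.mem_Icc] at hz
      rcases hp with ⟨_, hlt⟩ | ⟨hnB, _⟩
      · have h1 : x - z < y := lt_of_le_of_lt (le_max_left _ _) hlt
        linarith [hxyR.1.1, hxyR.2.2, hz.2]
      · exact hnB hxyB
    · obtain ⟨⟨hxyR, hxyB⟩, hz⟩ := hL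
      rw [hR, Set.mem_prod, Set.mem_Icc, Set.mem_Icc] at hxyR
      rw [Set.mem_Icc] at hz
      rcases hp with ⟨hinB, _⟩ | ⟨_, hlt⟩
      · exact hxyB hinB
      · have hmax : max (x - z) 0 = 0 := max_eq_right (by linarith [hxyR.1.2, hz.1])
        rw [hmax] at hlt
        linarith [hxyR.2.1]
  -- measure of L₁ ∪ L₂ is positive
  have hc : unif 0 2 (Set.Icc (0:ℝ) (1/2)) = unif 0 2 (Set.Icc (3/2:ℝ) 2) := by
    rw [unif_apply, unif_apply, Measure.restrict_apply measurableSet_Icc,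
      Measure.restrict_apply measurableSet_Icc,
      Set.inter_eq_left.2 (Set.Icc_subset_Icc (by norm_num) (by norm_num)),
      Set.inter_eq_left.2 (Set.Icc_subset_Icc (by norm_num) (by norm_num)),
      Real.volume_Icc, Real.volume_Icc]
    norm_num
  have hLsum : μ (L₁ ∪ L₂)
      = unif 0 2 (Set.Icc (0:ℝ) (1/2)) * (unif 0 2).prod (unif 0 1) R := by
    rw [measure_union hdisj hL₂m, hμ, key_s7 _ hS₁m _ measurableSet_Icc,
      key_s7 _ hS₂m _ measurableSet_Icc, ← hc, ← mul_add, hS₁, hS₂,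
      measure_inter_add_diff R hB]
  have hLpos : 0 < μ (L₁ ∪ L₂) := by
    rw [hLsum]
    refine ENNReal.mul_pos ?_ ?_
    · exact (unif_pos (le_refl 0) (by norm_num) (by norm_num)).ne'
    · rw [hR, Measure.prod_prod]
      exact (ENNReal.mul_pos
        (unif_pos (by norm_num) (by norm_num) (by norm_num)).ne'
        (unif_pos (by norm_num) (by norm_num) (by norm_num)).ne').ne'
  calc μ {p : ℝ × ℝ × ℝ |
          ((p.1, p.2.2) ∈ B ∧ max (p.1 - p.2.1) 0 < p.2.2) ∨
          ((p.1, p.2.2) ∉ B ∧ p.2.2 < max (p.1 - p.2.1) 0)}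
      ≤ μ ((L₁ ∪ L₂)ᶜ) := measure_mono hE_sub
    _ = 1 - μ (L₁ ∪ L₂) := by
        rw [measure_compl (hL₁m.union hL₂m) (measure_ne_top _ _), measure_univ]
    _ < 1 := ENNReal.sub_lt_self ENNReal.one_ne_top one_ne_zero hLpos.ne'
end

section
/- Let X, Y, Z be independent random variables, each uniformly distributed on [0,1]. For every Borel set D ⊆ ℝ, P( (X < Y and Z + min(X,Y) ∈ D) or (Y < X and Z + min(X,Y) ∉ D) ) = 1/2. -/
open MeasureTheory Set

instance : IsProbabilityMeasure (unif 0 1) := by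
  constructor
  simp [unif, Measure.restrict_apply, Real.volume_Icc]

lemma unif_singleton (x : ℝ) : unif 0 1 {x} = 0 := by
  simp [unif, Measure.restrict_apply]

lemma measurePreserving_T :
    MeasurePreserving (fun p : ℝ × ℝ × ℝ => (p.2.1, p.1, p.2.2))
      ((unif 0 1).prod ((unif 0 1).prod (unif 0 1)))
      ((unif 0 1).prod ((unif 0 1).prod (unif 0 1))) := by
  set ν := unif 0 1
  have h1 := (MeasureTheory.measurePreserving_prodAssoc ν ν ν).symm MeasurableEquiv.prodAssoc
  have h2 : MeasurePreserving (Prod.map (Prod.swap : ℝ × ℝ → ℝ × ℝ) (id : ℝ → ℝ))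
      ((ν.prod ν).prod ν) ((ν.prod ν).prod ν) :=
    (Measure.measurePreserving_swap).prod (MeasurePreserving.id ν)
  have h3 := MeasureTheory.measurePreserving_prodAssoc ν ν ν
  have := (h3.comp h2).comp h1
  convert this using 1
  funext p
  rfl

/-- Let `X`, `Y`, `Z` be independent, each `Uni(0,1)` (modelled by the product measure,
with `p = (x, y, z)`).  For every Borel set `D ⊆ ℝ`,
`P((X < Y ∧ Z + min X Y ∈ D) ∨ (Y < X ∧ Z + min X Y ∉ D)) = 1/2`. -/
theorem stmt_9 (D : Set ℝ) (hD : MeasurableSet D) :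
    ((unif 0 1).prod ((unif 0 1).prod (unif 0 1)))
        {p : ℝ × ℝ × ℝ |
          (p.1 < p.2.1 ∧ p.2.2 + min p.1 p.2.1 ∈ D) ∨
          (p.2.1 < p.1 ∧ p.2.2 + min p.1 p.2.1 ∉ D)} = 1/2 := by
  set ν := unif 0 1 with hν
  set μ := ν.prod (ν.prod ν) with hμ
  have hf : Measurable (fun p : ℝ × ℝ × ℝ => p.2.2 + min p.1 p.2.1) := by fun_prop
  set E : Set (ℝ × ℝ × ℝ) :=
    {p | (p.1 < p.2.1 ∧ p.2.2 + min p.1 p.2.1 ∈ D) ∨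
          (p.2.1 < p.1 ∧ p.2.2 + min p.1 p.2.1 ∉ D)} with hE
  set E' : Set (ℝ × ℝ × ℝ) :=
    {p | (p.2.1 < p.1 ∧ p.2.2 + min p.1 p.2.1 ∈ D) ∨
          (p.1 < p.2.1 ∧ p.2.2 + min p.1 p.2.1 ∉ D)} with hE'
  have hEm : MeasurableSet E := by
    apply MeasurableSet.union
    · exact (measurableSet_lt measurable_fst (measurable_fst.comp measurable_snd)).inter (hf hD)
    · exact (measurableSet_lt (measurable_fst.comp measurable_snd) measurable_fst).inter
        (hf hD).compl
  have hE'm : MeasurableSet E' := by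
    apply MeasurableSet.union
    · exact (measurableSet_lt (measurable_fst.comp measurable_snd) measurable_fst).inter (hf hD)
    · exact (measurableSet_lt measurable_fst (measurable_fst.comp measurable_snd)).inter
        (hf hD).compl
  -- E' is the preimage of E under the swap, same measure
  have hTpre : (fun p : ℝ × ℝ × ℝ => (p.2.1, p.1, p.2.2)) ⁻¹' E = E' := by
    ext ⟨x, y, z⟩
    simp only [hE, hE', mem_preimage, mem_setOf_eq, min_comm]
  have hsame : μ E' = μ E := by
    rw [← hTpre]
    exact measurePreserving_T.measure_preimage hEm.nullMeasurableSet
  -- disjointness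
  have hdisj : Disjoint E E' := by
    rw [Set.disjoint_left]
    rintro ⟨x, y, z⟩ (⟨h1, h2⟩ | ⟨h1, h2⟩) (⟨g1, g2⟩ | ⟨g1, g2⟩) <;>
      first | exact absurd h1 (not_lt.mpr g1.le) | exact h2 g2 | exact g2 h2
  -- union is the off-diagonal
  have hunion : E ∪ E' = {p : ℝ × ℝ × ℝ | p.1 ≠ p.2.1} := by
    ext ⟨x, y, z⟩
    simp only [hE, hE', mem_union, mem_setOf_eq, ne_eq]
    constructor
    · rintro ((⟨h, _⟩ | ⟨h, _⟩) | (⟨h, _⟩ | ⟨h, _⟩)) <;> first | exact h.ne | exact h.ne'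
    · intro h
      rcases lt_or_gt_of_ne h with h | h
      · by_cases hm : z + min x y ∈ D
        · exact Or.inl (Or.inl ⟨h, hm⟩)
        · exact Or.inr (Or.inr ⟨h, hm⟩)
      · by_cases hm : z + min x y ∈ D
        · exact Or.inr (Or.inl ⟨h, hm⟩)
        · exact Or.inl (Or.inr ⟨h, hm⟩)
  -- the diagonal has measure zero
  have hSm : MeasurableSet {p : ℝ × ℝ × ℝ | p.1 = p.2.1} :=
    measurableSet_eq_fun measurable_fst (measurable_fst.comp measurable_snd)
  have hdiag : μ {p : ℝ × ℝ × ℝ | p.1 = p.2.1} = 0 := by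
    rw [hμ, Measure.prod_apply hSm]
    have hfib : ∀ x : ℝ, (ν.prod ν) {a : ℝ × ℝ | x = a.1} = 0 := by
      intro x
      have heq : ({a : ℝ × ℝ | x = a.1}) = ({x} : Set ℝ) ×ˢ univ := by
        ext q
        constructor
        · intro hq; exact ⟨Set.mem_singleton_iff.mpr hq.symm, trivial⟩
        · rintro ⟨hq, -⟩; exact (Set.mem_singleton_iff.mp hq).symm
      rw [heq, Measure.prod_prod, unif_singleton, zero_mul]
    simp [hfib]
  have htot : μ (E ∪ E') = 1 := by
    have hcompl : ({p : ℝ × ℝ × ℝ | p.1 ≠ p.2.1}) = {p : ℝ × ℝ × ℝ | p.1 = p.2.1}ᶜ := rfl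
    rw [hunion, hcompl, prob_compl_eq_one_sub hSm, hdiag, tsub_zero]
  have hmu := measure_union (μ := μ) hdisj hE'm
  rw [hmu, hsame, ← two_mul] at htot
  have h2 : (2 : ENNReal) ≠ 0 := by norm_num
  have h2' : (2 : ENNReal) ≠ ⊤ := by norm_num
  rw [ENNReal.eq_div_iff h2 h2', htot]
end

section
/- Let X and Y be independent random variables, each uniformly distributed on [0,1]. For every Borel set D ⊆ ℝ, P( (X < Y and min(X,Y) ∈ D) or (Y < X and min(X,Y) ∉ D) ) = 1/2. -/
open MeasureTheory Set

instance (a b : ℝ) : NullSingletonClass (unif a b) := by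
  unfold unif
  constructor
  intro x
  rw [Measure.smul_apply, Measure.restrict_apply (measurableSet_singleton x)]
  have : volume ({x} ∩ Set.Icc a b) = 0 :=
    measure_mono_null Set.inter_subset_left (measure_singleton x)
  simp [this]

lemma unif_prob_s11 : IsProbabilityMeasure (unif 0 1) := by
  constructor
  simp [unif, Measure.smul_apply, Measure.restrict_apply, Real.volume_Icc]

lemma prod_diag_zero :
    ((unif 0 1).prod (unif 0 1)) {p : ℝ × ℝ | p.1 = p.2} = 0 := by
  have hm : MeasurableSet {p : ℝ × ℝ | p.1 = p.2} :=
    measurableSet_eq_fun measurable_fst measurable_snd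
  rw [Measure.prod_apply hm]
  have : ∀ x : ℝ, (Prod.mk x ⁻¹' {p : ℝ × ℝ | p.1 = p.2}) = {x} := by
    intro x; ext y; simp [eq_comm]
  simp [this]

lemma swap_eq (s : Set (ℝ × ℝ)) (hs : MeasurableSet s) :
    ((unif 0 1).prod (unif 0 1)) (Prod.swap ⁻¹' s)
      = ((unif 0 1).prod (unif 0 1)) s :=
  Measure.measurePreserving_swap.measure_preimage hs.nullMeasurableSet

lemma lt_half : ((unif 0 1).prod (unif 0 1)) {p : ℝ × ℝ | p.1 < p.2} = 1/2 := by
  set π := (unif 0 1).prod (unif 0 1) with hπ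
  have hL : MeasurableSet {p : ℝ × ℝ | p.1 < p.2} :=
    measurableSet_lt measurable_fst measurable_snd
  have hG : MeasurableSet {p : ℝ × ℝ | p.2 < p.1} :=
    measurableSet_lt measurable_snd measurable_fst
  have hswap : π {p : ℝ × ℝ | p.2 < p.1} = π {p : ℝ × ℝ | p.1 < p.2} := by
    have : (Prod.swap ⁻¹' {p : ℝ × ℝ | p.1 < p.2}) = {p : ℝ × ℝ | p.2 < p.1} := by
      ext p; simp
    rw [← this, swap_eq _ hL]
  have hprob : IsProbabilityMeasure π := by
    have := unif_prob_s11; exact MeasureTheory.Measure.prod.instIsProbabilityMeasure _ _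
  have huniv : π ({p : ℝ × ℝ | p.1 < p.2} ∪ ({p : ℝ × ℝ | p.2 < p.1} ∪ {p : ℝ × ℝ | p.1 = p.2})) = 1 := by
    have : ({p : ℝ × ℝ | p.1 < p.2} ∪ ({p : ℝ × ℝ | p.2 < p.1} ∪ {p : ℝ × ℝ | p.1 = p.2})) = univ := by
      ext p; simp [lt_or_gt_of_ne, mem_setOf_eq]
      rcases lt_trichotomy p.1 p.2 with h | h | h <;> tauto
    rw [this, measure_univ]
  have hd1 : Disjoint {p : ℝ × ℝ | p.1 < p.2} ({p : ℝ × ℝ | p.2 < p.1} ∪ {p : ℝ × ℝ | p.1 = p.2}) := by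
    rw [Set.disjoint_left]
    rintro p hp (hq | hq) <;> simp only [mem_setOf_eq] at *
    · exact absurd hq (lt_asymm hp)
    · exact absurd hq (ne_of_lt hp)
  have hd2 : Disjoint {p : ℝ × ℝ | p.2 < p.1} {p : ℝ × ℝ | p.1 = p.2} := by
    rw [Set.disjoint_left]
    intro p hp hq
    exact absurd hq (ne_of_gt hp)
  rw [measure_union hd1 ((hG.union (measurableSet_eq_fun measurable_fst measurable_snd))),
      measure_union hd2 (measurableSet_eq_fun measurable_fst measurable_snd),
      prod_diag_zero, add_zero, hswap] at huniv
  have h2 : (2 : ENNReal) * π {p : ℝ × ℝ | p.1 < p.2} = 1 := by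
    rw [two_mul]; exact huniv
  rw [ENNReal.eq_div_iff two_ne_zero ENNReal.ofNat_ne_top]
  exact h2

/-- Let `X` and `Y` be independent, each `Uni(0,1)` (modelled by the product measure,
with `p = (x, y)`).  For every Borel set `D ⊆ ℝ`,
`P((X < Y ∧ min X Y ∈ D) ∨ (Y < X ∧ min X Y ∉ D)) = 1/2`. -/
theorem stmt_11 (D : Set ℝ) (hD : MeasurableSet D) :
    ((unif 0 1).prod (unif 0 1))
        {p : ℝ × ℝ |
          (p.1 < p.2 ∧ min p.1 p.2 ∈ D) ∨ (p.2 < p.1 ∧ min p.1 p.2 ∉ D)} = 1/2 := by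
  set π := (unif 0 1).prod (unif 0 1) with hπ
  set S1 : Set (ℝ × ℝ) := {p | p.1 < p.2 ∧ p.1 ∈ D} with hS1
  set S1' : Set (ℝ × ℝ) := {p | p.1 < p.2 ∧ p.1 ∉ D} with hS1'
  set S2 : Set (ℝ × ℝ) := {p | p.2 < p.1 ∧ p.2 ∉ D} with hS2
  have hmS1 : MeasurableSet S1 :=
    (measurableSet_lt measurable_fst measurable_snd).inter (hD.preimage measurable_fst)
  have hmS1' : MeasurableSet S1' :=
    (measurableSet_lt measurable_fst measurable_snd).inter (hD.compl.preimage measurable_fst)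
  have hmS2 : MeasurableSet S2 :=
    (measurableSet_lt measurable_snd measurable_fst).inter (hD.compl.preimage measurable_snd)
  have hset : {p : ℝ × ℝ |
      (p.1 < p.2 ∧ min p.1 p.2 ∈ D) ∨ (p.2 < p.1 ∧ min p.1 p.2 ∉ D)} = S1 ∪ S2 := by
    ext p
    simp only [hS1, hS2, mem_setOf_eq, mem_union]
    constructor
    · rintro (⟨h, hm⟩ | ⟨h, hm⟩)
      · exact Or.inl ⟨h, by rwa [min_eq_left h.le] at hm⟩
      · exact Or.inr ⟨h, by rwa [min_eq_right h.le] at hm⟩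
    · rintro (⟨h, hm⟩ | ⟨h, hm⟩)
      · exact Or.inl ⟨h, by rwa [min_eq_left h.le]⟩
      · exact Or.inr ⟨h, by rwa [min_eq_right h.le]⟩
  have hS2eq : π S2 = π S1' := by
    have : (Prod.swap ⁻¹' S1') = S2 := by ext p; simp [hS1', hS2]
    rw [← this, swap_eq _ hmS1']
  have hdisj : Disjoint S1 S2 := by
    rw [Set.disjoint_left]
    rintro p ⟨h1, _⟩ ⟨h2, _⟩
    exact absurd h2 (lt_asymm h1)
  have hdisj' : Disjoint S1 S1' := by
    rw [Set.disjoint_left]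
    rintro p ⟨_, h1⟩ ⟨_, h2⟩
    exact h2 h1
  have hunion : S1 ∪ S1' = {p : ℝ × ℝ | p.1 < p.2} := by
    ext p
    simp only [hS1, hS1', mem_union, mem_setOf_eq]
    tauto
  rw [hset, measure_union hdisj hmS2, hS2eq, ← measure_union hdisj' hmS1', hunion, lt_half]
end

section
/- Let X, Y, Z, X', Y' be independent random variables, each uniformly distributed on [0,1]. For every Borel set B ⊆ ℝ³, P( (X < Y and (Z + X, X, Y') ∈ B) or (Y < X and (Z + Y, X', Y) ∉ B) ) < 1. -/
open MeasureTheory Set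

namespace Stmt12Aux

noncomputable def nu : Measure ℝ := volume.restrict (Set.Icc 0 1)

instance : IsProbabilityMeasure nu := by
  constructor
  rw [nu, Measure.restrict_apply_univ, Real.volume_Icc]
  norm_num

lemma nu_Ioo {a b : ℝ} (h0 : 0 ≤ a) (h1 : b ≤ 1) :
    nu (Set.Ioo a b) = ENNReal.ofReal (b - a) := by
  rw [nu, Measure.restrict_apply measurableSet_Ioo,
    Set.inter_eq_left.mpr (fun x (hx : x ∈ Set.Ioo a b) => Set.mem_Icc.mpr ⟨h0.trans hx.1.le, hx.2.le.trans h1⟩), Real.volume_Ioo]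

lemma mp_sigma {α β γ : Type*} [MeasurableSpace α] [MeasurableSpace β] [MeasurableSpace γ]
    (μa : Measure α) (μb : Measure β) (μc : Measure γ)
    [SFinite μa] [SFinite μb] [SFinite μc] :
    MeasurePreserving (fun p : α × β × γ => (p.2.1, p.1, p.2.2))
      (μa.prod (μb.prod μc)) (μb.prod (μa.prod μc)) := by
  have h0 : MeasurePreserving (MeasurableEquiv.prodAssoc.symm :
      α × β × γ ≃ᵐ (α × β) × γ) (μa.prod (μb.prod μc)) ((μa.prod μb).prod μc) :=
    MeasurePreserving.symm _ (measurePreserving_prodAssoc μa μb μc)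
  have h1 : MeasurePreserving (Prod.map (Prod.swap : α × β → β × α) (id : γ → γ))
      ((μa.prod μb).prod μc) ((μb.prod μa).prod μc) :=
    Measure.measurePreserving_swap.prod (MeasurePreserving.id μc)
  have h2 := measurePreserving_prodAssoc μb μa μc
  have hfun : (fun p : α × β × γ => (p.2.1, p.1, p.2.2)) =
      (MeasurableEquiv.prodAssoc : (β × α) × γ ≃ᵐ β × α × γ) ∘
        (Prod.map Prod.swap id) ∘
          (MeasurableEquiv.prodAssoc.symm : α × β × γ ≃ᵐ (α × β) × γ) := by
    funext p; rfl
  rw [hfun]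
  exact h2.comp (h1.comp h0)

lemma mp_pi : MeasurePreserving
    (fun p : ℝ × ℝ × ℝ × ℝ × ℝ => (p.2.1, p.2.2.2.2, p.2.2.1, p.1, p.2.2.2.1))
    (nu.prod (nu.prod (nu.prod (nu.prod nu))))
    (nu.prod (nu.prod (nu.prod (nu.prod nu)))) := by
  have s1 := mp_sigma nu nu (nu.prod (nu.prod nu))
  have sa := mp_sigma nu nu (nu.prod nu)
  have m1 := (MeasurePreserving.id nu).prod
    ((MeasurePreserving.id nu).prod (Measure.measurePreserving_swap (μ := nu) (ν := nu)))
  have m2 := (MeasurePreserving.id nu).prod (mp_sigma nu nu nu)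
  have tail := sa.comp (m2.comp (m1.comp sa))
  have full := ((MeasurePreserving.id nu).prod tail).comp s1
  exact full

end Stmt12Aux

namespace Stmt12Aux

lemma key (B : Set (ℝ × ℝ × ℝ)) (hB : MeasurableSet B) :
    (nu.prod (nu.prod (nu.prod (nu.prod nu))))
      ((Set.Ioo (0:ℝ) 4⁻¹ ×ˢ (Set.Ioo (2⁻¹:ℝ) 1 ×ˢ (Set.Ioo (2⁻¹:ℝ) (3/4) ×ˢ
          ((Set.univ : Set ℝ) ×ˢ Set.Ioo (4⁻¹:ℝ) 2⁻¹)))) ∩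
        {p : ℝ × ℝ × ℝ × ℝ × ℝ | (p.2.2.1 + p.1, p.1, p.2.2.2.2) ∈ B})
    ≤ (nu.prod (nu.prod (nu.prod (nu.prod nu))))
      {p : ℝ × ℝ × ℝ × ℝ × ℝ | p.2.2.2.2 < p.2.1 ∧ (p.2.2.1 + p.2.2.2.2, p.1, p.2.2.2.2) ∈ B} := by
  have hT1 : Measurable (fun p : ℝ × ℝ × ℝ × ℝ × ℝ => (p.2.2.1 + p.1, p.1, p.2.2.2.2)) := by
    fun_prop
  have hT2 : Measurable (fun p : ℝ × ℝ × ℝ × ℝ × ℝ =>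
      (p.2.2.1 + p.2.2.2.2, p.1, p.2.2.2.2)) := by fun_prop
  set S : Set (ℝ × ℝ × ℝ × ℝ × ℝ) :=
    (Set.Ioo (0:ℝ) 4⁻¹ ×ˢ (Set.Ioo (2⁻¹:ℝ) 1 ×ˢ (Set.Ioo (2⁻¹:ℝ) (3/4) ×ˢ
        ((Set.univ : Set ℝ) ×ˢ Set.Ioo (4⁻¹:ℝ) 2⁻¹)))) ∩
      {p : ℝ × ℝ × ℝ × ℝ × ℝ | (p.2.2.1 + p.1, p.1, p.2.2.2.2) ∈ B} with hSdef
  set A : Set (ℝ × ℝ × ℝ × ℝ × ℝ) :=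
    {p : ℝ × ℝ × ℝ × ℝ × ℝ | p.2.2.2.2 < p.2.1 ∧ (p.2.2.1 + p.2.2.2.2, p.1, p.2.2.2.2) ∈ B}
    with hAdef
  have hS : MeasurableSet S :=
    (measurableSet_Ioo.prod (measurableSet_Ioo.prod (measurableSet_Ioo.prod
      (MeasurableSet.univ.prod measurableSet_Ioo)))).inter (hB.preimage hT1)
  have hA : MeasurableSet A := by
    have h : A = {p : ℝ × ℝ × ℝ × ℝ × ℝ | p.2.2.2.2 < p.2.1} ∩
        {p : ℝ × ℝ × ℝ × ℝ × ℝ | (p.2.2.1 + p.2.2.2.2, p.1, p.2.2.2.2) ∈ B} := rfl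
    rw [h]
    exact (measurableSet_lt (by fun_prop) (by fun_prop)).inter (hB.preimage hT2)
  rw [Measure.prod_apply hS, Measure.prod_apply hA]
  refine lintegral_mono fun x => ?_
  rw [Measure.prod_apply (measurable_prodMk_left hS),
    Measure.prod_apply (measurable_prodMk_left hA)]
  refine lintegral_mono fun y => ?_
  have hFS : MeasurableSet (Prod.mk y ⁻¹' (Prod.mk x ⁻¹' S)) :=
    measurable_prodMk_left (measurable_prodMk_left hS)
  have hFA : MeasurableSet (Prod.mk y ⁻¹' (Prod.mk x ⁻¹' A)) :=
    measurable_prodMk_left (measurable_prodMk_left hA)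
  rw [← Measure.measurePreserving_swap.measure_preimage hFS.nullMeasurableSet,
    ← Measure.measurePreserving_swap.measure_preimage hFA.nullMeasurableSet]
  rw [Measure.prod_apply (measurable_swap hFS), Measure.prod_apply (measurable_swap hFA)]
  refine lintegral_mono fun w => ?_
  by_cases hx : x ∈ Set.Ioo (0:ℝ) 4⁻¹
  · by_cases hy : y ∈ Set.Ioo (2⁻¹:ℝ) 1
    · by_cases hw : w.2 ∈ Set.Ioo (4⁻¹:ℝ) 2⁻¹
      · -- main case
        have hWmeas : MeasurableSet {z : ℝ | (z + w.2, x, w.2) ∈ B} :=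
          hB.preimage (by fun_prop)
        have hsetA : Prod.mk w ⁻¹' (Prod.swap ⁻¹' (Prod.mk y ⁻¹' (Prod.mk x ⁻¹' A))) =
            {z : ℝ | (z + w.2, x, w.2) ∈ B} := by
          ext z
          simp only [hAdef, Set.mem_preimage, Prod.swap_prod_mk, Set.mem_setOf_eq]
          exact and_iff_right (hw.2.trans hy.1)
        have hsub : Prod.mk w ⁻¹' (Prod.swap ⁻¹' (Prod.mk y ⁻¹' (Prod.mk x ⁻¹' S))) ⊆
            (fun z => z + (x - w.2)) ⁻¹' ({z : ℝ | (z + w.2, x, w.2) ∈ B} ∩ Set.Icc 0 1) := by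
          intro z hz
          simp only [hSdef, Set.mem_preimage, Prod.swap_prod_mk, Set.mem_inter_iff,
            Set.mem_prod, Set.mem_setOf_eq, Set.mem_univ, true_and, Set.mem_Ioo] at hz
          obtain ⟨⟨-, -, hz1, -⟩, hzB⟩ := hz
          have hx1 := hx.1; have hx2 := hx.2; have hw1 := hw.1; have hw2 := hw.2
          refine Set.mem_preimage.mpr ⟨?_, Set.mem_Icc.mpr ⟨by linarith [hz1.1], ?_⟩⟩
          · have h : z + (x - w.2) + w.2 = z + x := by ring
            simp only [Set.mem_setOf_eq, h]
            exact hzB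
          · have : (3:ℝ)/4 + 4⁻¹ - 4⁻¹ ≤ 1 := by norm_num
            linarith [hz1.2]
        have hmeasS : MeasurableSet
            (Prod.mk w ⁻¹' (Prod.swap ⁻¹' (Prod.mk y ⁻¹' (Prod.mk x ⁻¹' S)))) :=
          measurable_prodMk_left (measurable_swap hFS)
        calc nu (Prod.mk w ⁻¹' (Prod.swap ⁻¹' (Prod.mk y ⁻¹' (Prod.mk x ⁻¹' S))))
            = volume ((Prod.mk w ⁻¹' (Prod.swap ⁻¹' (Prod.mk y ⁻¹' (Prod.mk x ⁻¹' S)))) ∩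
                Set.Icc 0 1) := Measure.restrict_apply hmeasS
          _ ≤ volume ((fun z => z + (x - w.2)) ⁻¹'
                ({z : ℝ | (z + w.2, x, w.2) ∈ B} ∩ Set.Icc 0 1)) :=
              measure_mono (Set.inter_subset_left.trans hsub)
          _ = volume ({z : ℝ | (z + w.2, x, w.2) ∈ B} ∩ Set.Icc 0 1) :=
              measure_preimage_add_right volume _ _
          _ = nu {z : ℝ | (z + w.2, x, w.2) ∈ B} :=
              (Measure.restrict_apply hWmeas).symm
          _ = nu (Prod.mk w ⁻¹' (Prod.swap ⁻¹' (Prod.mk y ⁻¹' (Prod.mk x ⁻¹' A)))) := by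
              rw [hsetA]
      · have h0 : Prod.mk w ⁻¹' (Prod.swap ⁻¹' (Prod.mk y ⁻¹' (Prod.mk x ⁻¹' S))) ⊆ ∅ := by
          intro z hz
          simp only [hSdef, Set.mem_preimage, Prod.swap_prod_mk, Set.mem_inter_iff,
            Set.mem_prod, Set.mem_setOf_eq, Set.mem_univ, true_and] at hz
          exact absurd hz.1.2.2.2 hw
        rw [measure_mono_null h0 measure_empty]
        exact zero_le
    · have h0 : Prod.mk w ⁻¹' (Prod.swap ⁻¹' (Prod.mk y ⁻¹' (Prod.mk x ⁻¹' S))) ⊆ ∅ := by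
        intro z hz
        simp only [hSdef, Set.mem_preimage, Prod.swap_prod_mk, Set.mem_inter_iff,
          Set.mem_prod, Set.mem_setOf_eq, Set.mem_univ, true_and] at hz
        exact absurd hz.1.2.1 hy
      rw [measure_mono_null h0 measure_empty]
      exact zero_le
  · have h0 : Prod.mk w ⁻¹' (Prod.swap ⁻¹' (Prod.mk y ⁻¹' (Prod.mk x ⁻¹' S))) ⊆ ∅ := by
      intro z hz
      simp only [hSdef, Set.mem_preimage, Prod.swap_prod_mk, Set.mem_inter_iff,
        Set.mem_prod, Set.mem_setOf_eq, Set.mem_univ, true_and] at hz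
      exact absurd hz.1.1 hx
    rw [measure_mono_null h0 measure_empty]
    exact zero_le

end Stmt12Aux

open Stmt12Aux in
/-- Let `X`, `Y`, `Z`, `X'`, `Y'` be independent, each `Uni(0,1)` (modelled by the product
measure, with `p = (x, y, z, x', y')`).  For every Borel set `B ⊆ ℝ³`,
`P((X < Y ∧ (Z + X, X, Y') ∈ B) ∨ (Y < X ∧ (Z + Y, X', Y) ∉ B)) < 1`. -/
theorem stmt_12 (B : Set (ℝ × ℝ × ℝ)) (hB : MeasurableSet B) :
    ((unif 0 1).prod ((unif 0 1).prod ((unif 0 1).prod ((unif 0 1).prod (unif 0 1)))))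
        {p : ℝ × ℝ × ℝ × ℝ × ℝ |
          (p.1 < p.2.1 ∧ (p.2.2.1 + p.1, p.1, p.2.2.2.2) ∈ B) ∨
          (p.2.1 < p.1 ∧ (p.2.2.1 + p.2.1, p.2.2.2.1, p.2.1) ∉ B)} < 1 := by
  have hunif : unif 0 1 = nu := by
    rw [unif, nu, Real.volume_Icc]
    norm_num
  rw [hunif]
  have hT1 : Measurable (fun p : ℝ × ℝ × ℝ × ℝ × ℝ => (p.2.2.1 + p.1, p.1, p.2.2.2.2)) := by
    fun_prop
  have hT2 : Measurable (fun p : ℝ × ℝ × ℝ × ℝ × ℝ =>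
      (p.2.2.1 + p.2.1, p.2.2.2.1, p.2.1)) := by fun_prop
  have hE : MeasurableSet {p : ℝ × ℝ × ℝ × ℝ × ℝ |
      (p.1 < p.2.1 ∧ (p.2.2.1 + p.1, p.1, p.2.2.2.2) ∈ B) ∨
      (p.2.1 < p.1 ∧ (p.2.2.1 + p.2.1, p.2.2.2.1, p.2.1) ∉ B)} := by
    have h : {p : ℝ × ℝ × ℝ × ℝ × ℝ |
        (p.1 < p.2.1 ∧ (p.2.2.1 + p.1, p.1, p.2.2.2.2) ∈ B) ∨
        (p.2.1 < p.1 ∧ (p.2.2.1 + p.2.1, p.2.2.2.1, p.2.1) ∉ B)} =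
        ({p : ℝ × ℝ × ℝ × ℝ × ℝ | p.1 < p.2.1} ∩
          {p : ℝ × ℝ × ℝ × ℝ × ℝ | (p.2.2.1 + p.1, p.1, p.2.2.2.2) ∈ B}) ∪
        ({p : ℝ × ℝ × ℝ × ℝ × ℝ | p.2.1 < p.1} ∩
          {p : ℝ × ℝ × ℝ × ℝ × ℝ | (p.2.2.1 + p.2.1, p.2.2.2.1, p.2.1) ∈ B}ᶜ) := rfl
    rw [h]
    exact ((measurableSet_lt (by fun_prop) (by fun_prop)).inter (hB.preimage hT1)).union
      ((measurableSet_lt (by fun_prop) (by fun_prop)).inter (hB.preimage hT2).compl)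
  by_contra hcon
  push_neg at hcon
  have hprob : IsProbabilityMeasure (nu.prod (nu.prod (nu.prod (nu.prod nu)))) := by
    infer_instance
  have hE1 : (nu.prod (nu.prod (nu.prod (nu.prod nu)))) {p : ℝ × ℝ × ℝ × ℝ × ℝ |
      (p.1 < p.2.1 ∧ (p.2.2.1 + p.1, p.1, p.2.2.2.2) ∈ B) ∨
      (p.2.1 < p.1 ∧ (p.2.2.1 + p.2.1, p.2.2.2.1, p.2.1) ∉ B)} = 1 :=
    le_antisymm prob_le_one hcon
  have hEc : (nu.prod (nu.prod (nu.prod (nu.prod nu)))) {p : ℝ × ℝ × ℝ × ℝ × ℝ |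
      (p.1 < p.2.1 ∧ (p.2.2.1 + p.1, p.1, p.2.2.2.2) ∈ B) ∨
      (p.2.1 < p.1 ∧ (p.2.2.1 + p.2.1, p.2.2.2.1, p.2.1) ∉ B)}ᶜ = 0 := by
    rw [measure_compl hE (measure_ne_top _ _), hE1, measure_univ, tsub_self]
  have hA1 : (nu.prod (nu.prod (nu.prod (nu.prod nu)))) {p : ℝ × ℝ × ℝ × ℝ × ℝ |
      p.1 < p.2.1 ∧ (p.2.2.1 + p.1, p.1, p.2.2.2.2) ∉ B} = 0 := by
    refine measure_mono_null ?_ hEc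
    rintro p ⟨h1, h2⟩ hp
    rcases hp with ⟨-, hb⟩ | ⟨hlt, -⟩
    · exact h2 hb
    · exact absurd h1 (lt_asymm hlt)
  have hA2m : MeasurableSet {p : ℝ × ℝ × ℝ × ℝ × ℝ |
      p.2.1 < p.1 ∧ (p.2.2.1 + p.2.1, p.2.2.2.1, p.2.1) ∈ B} := by
    have h : {p : ℝ × ℝ × ℝ × ℝ × ℝ |
        p.2.1 < p.1 ∧ (p.2.2.1 + p.2.1, p.2.2.2.1, p.2.1) ∈ B} =
        {p : ℝ × ℝ × ℝ × ℝ × ℝ | p.2.1 < p.1} ∩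
          {p : ℝ × ℝ × ℝ × ℝ × ℝ | (p.2.2.1 + p.2.1, p.2.2.2.1, p.2.1) ∈ B} := rfl
    rw [h]
    exact (measurableSet_lt (by fun_prop) (by fun_prop)).inter (hB.preimage hT2)
  have hA2 : (nu.prod (nu.prod (nu.prod (nu.prod nu)))) {p : ℝ × ℝ × ℝ × ℝ × ℝ |
      p.2.1 < p.1 ∧ (p.2.2.1 + p.2.1, p.2.2.2.1, p.2.1) ∈ B} = 0 := by
    refine measure_mono_null ?_ hEc
    rintro p ⟨h1, h2⟩ hp
    rcases hp with ⟨hlt, -⟩ | ⟨-, hb⟩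
    · exact absurd h1 (lt_asymm hlt)
    · exact hb h2
  have hA2' : (nu.prod (nu.prod (nu.prod (nu.prod nu)))) {p : ℝ × ℝ × ℝ × ℝ × ℝ |
      p.2.2.2.2 < p.2.1 ∧ (p.2.2.1 + p.2.2.2.2, p.1, p.2.2.2.2) ∈ B} = 0 := by
    have h := mp_pi.measure_preimage hA2m.nullMeasurableSet
    rw [hA2] at h
    exact h
  have hDpos : 0 < (nu.prod (nu.prod (nu.prod (nu.prod nu))))
      (Set.Ioo (0:ℝ) 4⁻¹ ×ˢ (Set.Ioo (2⁻¹:ℝ) 1 ×ˢ (Set.Ioo (2⁻¹:ℝ) (3/4) ×ˢ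
        ((Set.univ : Set ℝ) ×ˢ Set.Ioo (4⁻¹:ℝ) 2⁻¹)))) := by
    rw [Measure.prod_prod, Measure.prod_prod, Measure.prod_prod, Measure.prod_prod,
      measure_univ]
    refine ENNReal.mul_pos ?_ (ENNReal.mul_pos ?_ (ENNReal.mul_pos ?_
      (ENNReal.mul_pos one_ne_zero ?_).ne').ne').ne'
    · rw [nu_Ioo (by norm_num) (by norm_num)]
      exact (ENNReal.ofReal_pos.mpr (by norm_num)).ne'
    · rw [nu_Ioo (by norm_num) (by norm_num)]
      exact (ENNReal.ofReal_pos.mpr (by norm_num)).ne'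
    · rw [nu_Ioo (by norm_num) (by norm_num)]
      exact (ENNReal.ofReal_pos.mpr (by norm_num)).ne'
    · rw [nu_Ioo (by norm_num) (by norm_num)]
      exact (ENNReal.ofReal_pos.mpr (by norm_num)).ne'
  have hDsub : (Set.Ioo (0:ℝ) 4⁻¹ ×ˢ (Set.Ioo (2⁻¹:ℝ) 1 ×ˢ (Set.Ioo (2⁻¹:ℝ) (3/4) ×ˢ
        ((Set.univ : Set ℝ) ×ˢ Set.Ioo (4⁻¹:ℝ) 2⁻¹)))) ⊆
      {p : ℝ × ℝ × ℝ × ℝ × ℝ | p.1 < p.2.1 ∧ (p.2.2.1 + p.1, p.1, p.2.2.2.2) ∉ B} ∪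
      ((Set.Ioo (0:ℝ) 4⁻¹ ×ˢ (Set.Ioo (2⁻¹:ℝ) 1 ×ˢ (Set.Ioo (2⁻¹:ℝ) (3/4) ×ˢ
        ((Set.univ : Set ℝ) ×ˢ Set.Ioo (4⁻¹:ℝ) 2⁻¹)))) ∩
        {p : ℝ × ℝ × ℝ × ℝ × ℝ | (p.2.2.1 + p.1, p.1, p.2.2.2.2) ∈ B}) := by
    intro p hp
    by_cases hb : (p.2.2.1 + p.1, p.1, p.2.2.2.2) ∈ B
    · exact Or.inr ⟨hp, hb⟩
    · refine Or.inl ⟨?_, hb⟩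
      have hp' := hp
      simp only [Set.mem_prod, Set.mem_Ioo] at hp'
      have h1 := hp'.1.2
      have h2 := hp'.2.1.1
      calc p.1 < 4⁻¹ := h1
        _ ≤ 2⁻¹ := by norm_num
        _ < p.2.1 := h2
  have hle : (nu.prod (nu.prod (nu.prod (nu.prod nu))))
      (Set.Ioo (0:ℝ) 4⁻¹ ×ˢ (Set.Ioo (2⁻¹:ℝ) 1 ×ˢ (Set.Ioo (2⁻¹:ℝ) (3/4) ×ˢ
        ((Set.univ : Set ℝ) ×ˢ Set.Ioo (4⁻¹:ℝ) 2⁻¹)))) ≤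
      0 + (nu.prod (nu.prod (nu.prod (nu.prod nu))))
        ((Set.Ioo (0:ℝ) 4⁻¹ ×ˢ (Set.Ioo (2⁻¹:ℝ) 1 ×ˢ (Set.Ioo (2⁻¹:ℝ) (3/4) ×ˢ
          ((Set.univ : Set ℝ) ×ˢ Set.Ioo (4⁻¹:ℝ) 2⁻¹)))) ∩
          {p : ℝ × ℝ × ℝ × ℝ × ℝ | (p.2.2.1 + p.1, p.1, p.2.2.2.2) ∈ B}) := by
    rw [← hA1]
    exact (measure_mono hDsub).trans (measure_union_le _ _)
  rw [zero_add] at hle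
  have hSpos := lt_of_lt_of_le hDpos hle
  have hfinal := lt_of_lt_of_le hSpos ((key B hB).trans hA2'.le)
  exact lt_irrefl 0 hfinal
end
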